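/- arXiv:2007.08369 — 2 statements merged into one kernel-verified Lean document; each statement's English description precedes it below -/
import Mathlib

section
/- Let W be a standard Brownian motion. Then for every M > 0, with probability one, sup_{1 ≤ s ≤ t < ∞} t^{-3/2} |t W(s) - s W(t)| ≥ M. Consequently this supremum is almost surely infinite. -/
open MeasureTheory ProbabilityTheory Filter

noncomputable section

open Real
open scoped NNReal ENNReal

lemma integrable_pow_gauss (n : ℕ) :
    Integrable (fun x : ℝ => x ^ n * Real.exp (-2⁻¹ * x ^ 2)) := by
  have := integrable_rpow_mul_exp_neg_mul_sq (b := 2⁻¹) (by norm_num)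
    (s := (n : ℝ)) (lt_of_lt_of_le neg_one_lt_zero (Nat.cast_nonneg n))
  simpa only [Real.rpow_natCast] using this

lemma tendsto_pow_gauss_atTop (m : ℕ) :
    Tendsto (fun x : ℝ => x ^ m * Real.exp (-2⁻¹ * x ^ 2)) atTop (nhds 0) := by
  have h := rpow_mul_exp_neg_mul_sq_isLittleO_exp_neg (b := 2⁻¹) (by norm_num) (m : ℝ)
  have h2 : (fun x : ℝ => x ^ m * Real.exp (-2⁻¹ * x ^ 2))
      =o[atTop] fun x : ℝ => Real.exp (-(1/2) * x) := by
    refine h.congr' ?_ (Eventually.of_forall fun _ => rfl)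
    filter_upwards [eventually_gt_atTop (0:ℝ)] with x hx
    rw [Real.rpow_natCast]
  have h0 : Tendsto (fun x : ℝ => -(1/2) * x) atTop atBot := by
    have : Tendsto (fun x : ℝ => (1/2) * x) atTop atTop :=
      Tendsto.const_mul_atTop (by norm_num) tendsto_id
    have := tendsto_neg_atTop_atBot.comp this
    refine this.congr fun x => ?_
    simp [Function.comp]
  have h3 : Tendsto (fun x : ℝ => Real.exp (-(1/2) * x)) atTop (nhds 0) :=
    Real.tendsto_exp_atBot.comp h0
  exact h2.isBigO.trans_tendsto h3

lemma tendsto_pow_gauss_atBot (m : ℕ) :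
    Tendsto (fun x : ℝ => x ^ m * Real.exp (-2⁻¹ * x ^ 2)) atBot (nhds 0) := by
  have h := ((tendsto_pow_gauss_atTop m).const_mul ((-1:ℝ)^m)).comp tendsto_neg_atBot_atTop
  simp only [mul_zero] at h
  refine h.congr fun x => ?_
  simp only [Function.comp]
  rw [neg_sq, ← mul_assoc, ← mul_pow, neg_mul_neg, one_mul]

lemma gauss_moment_rec (n : ℕ) :
    ∫ x : ℝ, x ^ (n + 2) * Real.exp (-2⁻¹ * x ^ 2)
      = (n + 1 : ℝ) * ∫ x : ℝ, x ^ n * Real.exp (-2⁻¹ * x ^ 2) := by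
  set f : ℝ → ℝ := fun x => x ^ (n+1) * Real.exp (-2⁻¹ * x ^ 2) with hf
  set f' : ℝ → ℝ := fun x =>
    (n + 1 : ℝ) * (x ^ n * Real.exp (-2⁻¹ * x ^ 2)) - x ^ (n+2) * Real.exp (-2⁻¹ * x ^ 2) with hf'
  have hderiv : ∀ x : ℝ, HasDerivAt f (f' x) x := by
    intro x
    have h1 : HasDerivAt (fun x : ℝ => -2⁻¹ * x ^ 2) (-2⁻¹ * (2 * x)) x := by
      simpa using (hasDerivAt_pow 2 x).const_mul (-2⁻¹ : ℝ)
    have h3 := (hasDerivAt_pow (n+1) x).mul h1.exp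
    refine h3.congr_deriv ?_
    simp only [hf', Nat.cast_add, Nat.cast_one, Nat.add_sub_cancel]
    ring
  have hint : Integrable f' :=
    (((integrable_pow_gauss n).const_mul ((n:ℝ)+1)).sub (integrable_pow_gauss (n+2))).congr
      (Eventually.of_forall fun x => rfl)
  have key := integral_of_hasDerivAt_of_tendsto hderiv hint
    (tendsto_pow_gauss_atBot (n+1)) (tendsto_pow_gauss_atTop (n+1))
  simp only [sub_zero, sub_self] at key
  have expand : ∫ x, f' x
      = (n+1:ℝ) * (∫ x : ℝ, x ^ n * Real.exp (-2⁻¹ * x ^ 2))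
        - ∫ x : ℝ, x ^ (n+2) * Real.exp (-2⁻¹ * x ^ 2) := by
    rw [hf', integral_sub ((integrable_pow_gauss n).const_mul ((n:ℝ)+1))
      (integrable_pow_gauss (n+2)), integral_const_mul]
  rw [key] at expand
  linarith [expand]

open scoped NNReal ENNReal

lemma integral_gaussianReal_eq (g : ℝ → ℝ) :
    ∫ x, g x ∂(gaussianReal 0 1) = ∫ x, gaussianPDFReal 0 1 x * g x := by
  rw [gaussianReal_of_var_ne_zero 0 one_ne_zero]
  have hd : gaussianPDF 0 1 = fun x => ((Real.toNNReal (gaussianPDFReal 0 1 x) : ℝ≥0) : ℝ≥0∞) :=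
    rfl
  rw [hd, integral_withDensity_eq_integral_smul (measurable_gaussianPDFReal 0 1).real_toNNReal g]
  congr 1 with x
  rw [NNReal.smul_def, Real.coe_toNNReal _ (gaussianPDFReal_nonneg 0 1 x), smul_eq_mul]

lemma gaussianPDFReal_zero_one (x : ℝ) :
    gaussianPDFReal 0 1 x = (Real.sqrt (2 * π))⁻¹ * Real.exp (-2⁻¹ * x ^ 2) := by
  simp only [gaussianPDFReal, NNReal.coe_one, mul_one, sub_zero]
  congr 1
  ring

/-- moments of the standard gaussian -/
def Mom (n : ℕ) : ℝ := ∫ x, x ^ n ∂(gaussianReal 0 1)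

lemma Mom_eq (n : ℕ) :
    Mom n = (Real.sqrt (2 * π))⁻¹ * ∫ x : ℝ, x ^ n * Real.exp (-2⁻¹ * x ^ 2) := by
  rw [Mom, integral_gaussianReal_eq, ← integral_const_mul]
  congr 1 with x
  rw [gaussianPDFReal_zero_one]
  ring

lemma Mom_zero : Mom 0 = 1 := by
  simp [Mom]

lemma Mom_rec (n : ℕ) : Mom (n + 2) = (n + 1 : ℝ) * Mom n := by
  rw [Mom_eq, Mom_eq, gauss_moment_rec]
  ring

/-- double factorial -/
def dfN (q : ℕ) : ℕ := ∏ j ∈ Finset.range q, (2 * j + 1)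

lemma dfN_succ (q : ℕ) : dfN (q + 1) = (2 * q + 1) * dfN q := by
  rw [dfN, dfN, Finset.prod_range_succ]
  ring

lemma Mom_even (q : ℕ) : Mom (2 * q) = dfN q := by
  induction q with
  | zero => simpa [dfN] using Mom_zero
  | succ q ih =>
    have h2 : 2 * (q + 1) = 2 * q + 2 := by ring
    rw [h2, Mom_rec, ih, dfN_succ]
    push_cast
    ring

lemma fact_le_dfN (q : ℕ) : q.factorial ≤ dfN q := by
  induction q with
  | zero => simp [dfN]
  | succ q ih =>
    rw [Nat.factorial_succ, dfN_succ]
    exact Nat.mul_le_mul (by omega) ih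

lemma dfN_formula (q : ℕ) : (2 * q).factorial = dfN q * 2 ^ q * q.factorial := by
  induction q with
  | zero => simp [dfN]
  | succ q ih =>
    have h2 : 2 * (q + 1) = (2 * q + 1) + 1 := by ring
    rw [h2, Nat.factorial_succ (2*q+1), Nat.factorial_succ (2*q), Nat.factorial_succ q,
      dfN_succ, ih]
    ring

lemma dfN_pos (q : ℕ) : 0 < dfN q := lt_of_lt_of_le q.factorial_pos (fact_le_dfN q)

/-- the combinatorial identity -/
lemma dfN_id (m : ℕ) :
    (dfN (2 * m) : ℝ) * ((2 * m).choose m) = (dfN m : ℝ)^2 * ((4 * m).choose (2 * m)) := by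
  have h1 : ((4 * m).factorial : ℝ) = (dfN (2 * m) : ℝ) * 2 ^ (2 * m) * ((2 * m).factorial : ℝ) := by
    have := dfN_formula (2 * m)
    rw [show 2 * (2 * m) = 4 * m by ring] at this
    exact_mod_cast this
  have h2 : ((2 * m).factorial : ℝ) = (dfN m : ℝ) * 2 ^ m * (m.factorial : ℝ) := by
    exact_mod_cast dfN_formula m
  have e1 : ((2 * m).choose m : ℝ) * (m.factorial : ℝ) * (m.factorial : ℝ)
      = ((2 * m).factorial : ℝ) := by
    have := Nat.choose_mul_factorial_mul_factorial (show m ≤ 2 * m by omega)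
    rw [show 2 * m - m = m by omega] at this
    exact_mod_cast this
  have e2 : ((4 * m).choose (2 * m) : ℝ) * ((2 * m).factorial : ℝ) * ((2 * m).factorial : ℝ)
      = ((4 * m).factorial : ℝ) := by
    have := Nat.choose_mul_factorial_mul_factorial (show 2 * m ≤ 4 * m by omega)
    rw [show 4 * m - 2 * m = 2 * m by omega] at this
    exact_mod_cast this
  set a : ℝ := (dfN (2 * m) : ℝ)
  set b : ℝ := (dfN m : ℝ)
  set c1 : ℝ := ((2 * m).choose m : ℝ)
  set c2 : ℝ := ((4 * m).choose (2 * m) : ℝ)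
  set F : ℝ := (m.factorial : ℝ) with hF0
  set G : ℝ := ((2 * m).factorial : ℝ) with hG0
  set H : ℝ := ((4 * m).factorial : ℝ)
  have hK : (0:ℝ) < 2 ^ (2 * m) * F * F * G := by
    have hF : (0:ℝ) < F := by rw [hF0]; exact_mod_cast m.factorial_pos
    have hG : (0:ℝ) < G := by rw [hG0]; exact_mod_cast (2*m).factorial_pos
    positivity
  apply mul_right_cancel₀ (ne_of_gt hK)
  calc a * c1 * (2 ^ (2*m) * F * F * G) = (a * 2 ^ (2*m) * G) * (c1 * F * F) := by ring
    _ = H * G := by rw [← h1, e1]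
    _ = (c2 * G * G) * G := by rw [← e2]
    _ = (b * 2 ^ m * F)^2 * c2 * G := by rw [h2]; ring
    _ = b^2 * c2 * (2 ^ (2*m) * F * F * G) := by rw [show (2:ℝ)^(2*m) = 2^m * 2^m from by rw [two_mul, pow_add]]; ring

lemma integrable_abs_pow_gaussianReal (n : ℕ) :
    Integrable (fun x : ℝ => |x| ^ n) (gaussianReal 0 1) := by
  rw [gaussianReal_of_var_ne_zero 0 one_ne_zero]
  have hd : gaussianPDF 0 1 = fun x => ((Real.toNNReal (gaussianPDFReal 0 1 x) : ℝ≥0) : ℝ≥0∞) :=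
    rfl
  rw [hd, integrable_withDensity_iff_integrable_smul (measurable_gaussianPDFReal 0 1).real_toNNReal]
  have : Integrable (fun x : ℝ => (Real.sqrt (2 * π))⁻¹ * (|x| ^ n * Real.exp (-2⁻¹ * x ^ 2))) := by
    refine Integrable.const_mul ?_ _
    have := (integrable_pow_gauss n).abs
    refine this.congr (Eventually.of_forall fun x => ?_)
    dsimp only
    rw [abs_mul, abs_pow, abs_of_pos (Real.exp_pos _)]
  refine this.congr (Eventually.of_forall fun x => ?_)
  dsimp only
  rw [NNReal.smul_def, Real.coe_toNNReal _ (gaussianPDFReal_nonneg 0 1 x), smul_eq_mul,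
    gaussianPDFReal_zero_one]
  ring

lemma integral_pow_gaussianReal (v : ℝ≥0) (n : ℕ) :
    ∫ x, x ^ n ∂(gaussianReal 0 v) = (Real.sqrt v) ^ n * Mom n := by
  have hc : gaussianReal 0 v = Measure.map (fun x => Real.sqrt v * x) (gaussianReal 0 1) := by
    have := gaussianReal_map_const_mul (μ := 0) (v := 1) (Real.sqrt v)
    rw [show ((Real.sqrt v) * (0:ℝ)) = 0 by ring] at this
    rw [show (fun x => Real.sqrt v * x) = ((Real.sqrt v) * ·) from rfl, this]
    congr 1
    ext
    simp [Real.sq_sqrt v.coe_nonneg]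
  rw [hc, integral_map (by fun_prop) (by fun_prop)]
  simp_rw [mul_pow]
  rw [integral_const_mul, Mom]

section Pair

variable {Ω : Type*} [MeasureSpace Ω] [IsProbabilityMeasure (volume : Measure Ω)]
variable {X Y : Ω → ℝ}

lemma law_single (hX : Measurable X) (hY : Measurable Y)
    (HL : ∀ a b : ℝ, Measure.map (fun ω => a * X ω + b * Y ω) volume
      = gaussianReal 0 (Real.toNNReal (a ^ 2 + b ^ 2))) :
    Measure.map X volume = gaussianReal 0 1 := by
  have := HL 1 0
  have h1 : (fun ω => 1 * X ω + 0 * Y ω) = X := by funext; ring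
  rw [h1] at this
  rw [this]
  norm_num

lemma integrable_abs_pow_rv (hX : Measurable X)
    (hlaw : Measure.map X volume = gaussianReal 0 1) (n : ℕ) :
    Integrable (fun ω => |X ω| ^ n) (volume : Measure Ω) := by
  have h := (integrable_map_measure (μ := (volume : Measure Ω)) (f := X)
    (g := fun x : ℝ => |x| ^ n)
    (by rw [hlaw]; exact (measurable_abs.pow_const n).aestronglyMeasurable) hX.aemeasurable).mp
  rw [hlaw] at h
  exact h (integrable_abs_pow_gaussianReal n)

lemma integral_pow_rv (hX : Measurable X)
    (hlaw : Measure.map X volume = gaussianReal 0 1) (n : ℕ) :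
    ∫ ω, X ω ^ n ∂(volume : Measure Ω) = Mom n := by
  have h := integral_map (μ := (volume : Measure Ω)) hX.aemeasurable
    (f := fun x : ℝ => x ^ n) (by fun_prop)
  rw [hlaw] at h
  rw [← h, Mom]

lemma integrable_prod_pow (hX : Measurable X) (hY : Measurable Y)
    (hlX : Measure.map X volume = gaussianReal 0 1)
    (hlY : Measure.map Y volume = gaussianReal 0 1)
    {i j N : ℕ} (hij : i + j = N) :
    Integrable (fun ω => X ω ^ i * Y ω ^ j) (volume : Measure Ω) := by
  refine Integrable.mono' ((integrable_abs_pow_rv hX hlX N).add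
    (integrable_abs_pow_rv hY hlY N))
    (((hX.pow_const i).mul (hY.pow_const j)).aestronglyMeasurable)
    (Eventually.of_forall fun ω => ?_)
  rw [Real.norm_eq_abs, abs_mul, abs_pow, abs_pow]
  rcases le_total (|X ω|) (|Y ω|) with h | h
  · have h1 : |X ω| ^ i * |Y ω| ^ j ≤ |Y ω| ^ i * |Y ω| ^ j :=
      mul_le_mul_of_nonneg_right (pow_le_pow_left₀ (abs_nonneg _) h i) (by positivity)
    refine le_trans h1 ?_
    rw [← pow_add, hij]
    exact le_add_of_nonneg_left (by positivity)
  · have h1 : |X ω| ^ i * |Y ω| ^ j ≤ |X ω| ^ i * |X ω| ^ j :=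
      mul_le_mul_of_nonneg_left (pow_le_pow_left₀ (abs_nonneg _) h j) (by positivity)
    refine le_trans h1 ?_
    rw [← pow_add, hij]
    exact le_add_of_nonneg_right (by positivity)

lemma prod_moment (hX : Measurable X) (hY : Measurable Y)
    (HL : ∀ a b : ℝ, Measure.map (fun ω => a * X ω + b * Y ω) volume
      = gaussianReal 0 (Real.toNNReal (a ^ 2 + b ^ 2))) (m : ℕ) :
    ∫ ω, X ω ^ (2 * m) * Y ω ^ (2 * m) ∂(volume : Measure Ω) = (Mom (2 * m)) ^ 2 := by
  have HLswap : ∀ a b : ℝ, Measure.map (fun ω => a * Y ω + b * X ω) volume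
      = gaussianReal 0 (Real.toNNReal (a ^ 2 + b ^ 2)) := by
    intro a b
    rw [show (fun ω => a * Y ω + b * X ω) = (fun ω => b * X ω + a * Y ω) from
      funext fun ω => by ring, HL b a, add_comm (b^2)]
  have hlX : Measure.map X volume = gaussianReal 0 1 := law_single hX hY HL
  have hlY : Measure.map Y volume = gaussianReal 0 1 := law_single hY hX HLswap
  set N := 4 * m with hN
  set J : ℕ → ℝ := fun i => ∫ ω, X ω ^ i * Y ω ^ (N - i) ∂(volume : Measure Ω) with hJ
  -- the two polynomials
  set P : Polynomial ℝ := ∑ i ∈ Finset.range (N+1),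
    Polynomial.C (J i * (N.choose i : ℝ)) * Polynomial.X ^ i with hP
  set Q : Polynomial ℝ := Polynomial.C (Mom N) * ∑ j ∈ Finset.range (2*m+1),
    Polynomial.C (((2*m).choose j : ℝ)) * Polynomial.X ^ (2*j) with hQ
  have key : ∀ a : ℝ, P.eval a = Q.eval a := by
    intro a
    have hPe : P.eval a = ∑ i ∈ Finset.range (N+1), (J i * (N.choose i : ℝ)) * a ^ i := by
      rw [hP, Polynomial.eval_finset_sum]
      simp
    have hQe : Q.eval a = Mom N * ∑ j ∈ Finset.range (2*m+1),
        (((2*m).choose j : ℝ)) * (a^2) ^ j := by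
      rw [hQ]
      simp [Polynomial.eval_finset_sum, pow_mul]
    rw [hPe, hQe]
    -- both equal ∫ (a X + Y)^N
    have hint : ∀ i ∈ Finset.range (N+1),
        Integrable (fun ω => (a * X ω) ^ i * Y ω ^ (N - i) * ((N.choose i : ℕ) : ℝ))
          (volume : Measure Ω) := by
      intro i hi
      rw [Finset.mem_range] at hi
      have h1 : Integrable (fun ω => (a ^ i * ((N.choose i : ℕ) : ℝ)) *
          (X ω ^ i * Y ω ^ (N - i))) (volume : Measure Ω) :=
        (integrable_prod_pow (i := i) (j := N - i) (N := N) hX hY hlX hlY (by omega)).const_mul _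
      refine h1.congr (Eventually.of_forall fun ω => ?_)
      dsimp only
      rw [mul_pow]; ring
    have hL1 : ∫ ω, (a * X ω + Y ω) ^ N ∂(volume : Measure Ω)
        = ∑ i ∈ Finset.range (N+1), (J i * (N.choose i : ℝ)) * a ^ i := by
      have : (fun ω => (a * X ω + Y ω) ^ N) = fun ω =>
          ∑ i ∈ Finset.range (N+1), (a * X ω) ^ i * Y ω ^ (N - i) * ((N.choose i : ℕ) : ℝ) := by
        funext ω
        rw [add_pow]
      rw [this, integral_finset_sum _ hint]
      refine Finset.sum_congr rfl fun i hi => ?_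
      rw [Finset.mem_range] at hi
      have : ∀ ω, (a * X ω) ^ i * Y ω ^ (N - i) * ((N.choose i : ℕ) : ℝ)
          = (a ^ i * ((N.choose i : ℕ) : ℝ)) * (X ω ^ i * Y ω ^ (N - i)) := by
        intro ω; rw [mul_pow]; ring
      simp_rw [this]
      rw [integral_const_mul, hJ]
      ring
    have hL2 : ∫ ω, (a * X ω + Y ω) ^ N ∂(volume : Measure Ω)
        = Mom N * ∑ j ∈ Finset.range (2*m+1), (((2*m).choose j : ℝ)) * (a^2) ^ j := by
      have hlaw := HL a 1
      have heq : (fun ω => a * X ω + 1 * Y ω) = fun ω => a * X ω + Y ω := by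
        funext ω; ring
      rw [heq] at hlaw
      have h := integral_map (μ := (volume : Measure Ω))
        (φ := fun ω => a * X ω + Y ω) (by fun_prop)
        (f := fun x : ℝ => x ^ N) (by fun_prop)
      rw [hlaw] at h
      rw [← h, integral_pow_gaussianReal]
      have hv : ((Real.toNNReal (a ^ 2 + 1 ^ 2) : ℝ≥0) : ℝ) = a ^ 2 + 1 := by
        rw [Real.coe_toNNReal _ (by positivity)]
        norm_num
      have hs : (Real.sqrt (Real.toNNReal (a ^ 2 + 1 ^ 2) : ℝ)) ^ N = (a^2 + 1) ^ (2*m) := by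
        rw [hN, show 4 * m = 2 * (2 * m) by ring, pow_mul, Real.sq_sqrt (by positivity), hv]
      rw [hs, add_pow]
      simp only [one_pow, mul_one]
      rw [mul_comm]
      congr 1
      exact Finset.sum_congr rfl fun j _ => mul_comm _ _
    rw [← hL1, hL2]
  have hPQ : P = Q := Polynomial.funext key
  have hcoeff : P.coeff (2*m) = Q.coeff (2*m) := by rw [hPQ]
  have hcP : P.coeff (2*m) = J (2*m) * (N.choose (2*m) : ℝ) := by
    rw [hP, Polynomial.finset_sum_coeff]
    rw [Finset.sum_eq_single (2*m)]
    · rw [Polynomial.coeff_C_mul, Polynomial.coeff_X_pow, if_pos rfl, mul_one]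
    · intro i _ hne
      rw [Polynomial.coeff_C_mul, Polynomial.coeff_X_pow, if_neg (fun h => hne h.symm), mul_zero]
    · intro h
      exfalso; apply h
      rw [Finset.mem_range, hN]; omega
  have hcQ : Q.coeff (2*m) = Mom N * ((2*m).choose m : ℝ) := by
    rw [hQ, Polynomial.coeff_C_mul, Polynomial.finset_sum_coeff]
    rw [Finset.sum_eq_single m]
    · rw [Polynomial.coeff_C_mul, Polynomial.coeff_X_pow, if_pos rfl, mul_one]
    · intro j _ hne
      rw [Polynomial.coeff_C_mul, Polynomial.coeff_X_pow, if_neg (by omega), mul_zero]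
    · intro h
      exfalso; apply h
      rw [Finset.mem_range]; omega
  -- conclude
  have hfinal : J (2*m) * (N.choose (2*m) : ℝ) = Mom N * ((2*m).choose m : ℝ) := by
    rw [← hcP, ← hcQ, hcoeff]
  have hMomN : Mom N = (dfN (2*m) : ℝ) := by
    rw [hN, show 4*m = 2*(2*m) by ring, Mom_even]
  have hMom2m : Mom (2*m) = (dfN m : ℝ) := Mom_even m
  have hchoose_ne : ((N.choose (2*m) : ℕ) : ℝ) ≠ 0 := by
    rw [hN]
    exact_mod_cast (Nat.choose_pos (by omega : 2*m ≤ 4*m)).ne'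
  have hJval : J (2*m) = ∫ ω, X ω ^ (2*m) * Y ω ^ (2*m) ∂(volume : Measure Ω) := by
    rw [hJ]
    dsimp only
    rw [show N - 2*m = 2*m by omega]
  rw [← hJval, hMom2m]
  apply mul_right_cancel₀ hchoose_ne
  rw [hfinal, hMomN, show ((dfN m : ℝ))^2 * ((N.choose (2*m) : ℕ) : ℝ) = (dfN m : ℝ)^2 * (((4*m).choose (2*m) : ℕ) : ℝ) from by rw [hN], ← dfN_id]

end Pair

/-- A standard Brownian motion: a centered Gaussian process indexed by nonnegative
times with covariance `min s t` and almost surely continuous sample paths on `[0,∞)`. -/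
def IsStdBM {Ω : Type*} [MeasureSpace Ω] (W : ℝ → Ω → ℝ) : Prop :=
  (∀ t : ℝ, Measurable (W t)) ∧
  (∀ᵐ ω ∂(volume : Measure Ω), ContinuousOn (fun t => W t ω) (Set.Ici 0)) ∧
  ∀ (n : ℕ) (c t : Fin n → ℝ), (∀ i, 0 ≤ t i) →
    Measure.map (fun ω => ∑ i, c i * W (t i) ω) volume =
      gaussianReal 0 (Real.toNNReal (∑ i, ∑ j, c i * c j * min (t i) (t j)))

section BM

variable {Ω : Type*} [MeasureSpace Ω] [IsProbabilityMeasure (volume : Measure Ω)]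
variable {W : ℝ → Ω → ℝ}

/-- the normalized variables -/
def ZB (W : ℝ → Ω → ℝ) (j : ℕ) (ω : Ω) : ℝ :=
  (2 * W ((2:ℝ)^j) ω - W ((2:ℝ)^(j+1)) ω) / Real.sqrt ((2:ℝ)^(j+1))

lemma measurable_ZB (hW : IsStdBM W) (j : ℕ) : Measurable (ZB W j) := by
  have h1 := hW.1 ((2:ℝ)^j)
  have h2 := hW.1 ((2:ℝ)^(j+1))
  unfold ZB
  fun_prop

lemma law_pair_f (hW : IsStdBM W) {j j' : ℕ} (hjj : j < j') (a b : ℝ) :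
    Measure.map (fun ω => a * (2 * W ((2:ℝ)^j) ω - W ((2:ℝ)^(j+1)) ω)
        + b * (2 * W ((2:ℝ)^j') ω - W ((2:ℝ)^(j'+1)) ω)) volume
      = gaussianReal 0 (Real.toNNReal (a^2 * 2^(j+1) + b^2 * 2^(j'+1))) := by
  have key := hW.2.2 4 ![2*a, -a, 2*b, -b] ![(2:ℝ)^j, 2^(j+1), 2^(j'), 2^(j'+1)]
    (by intro i; fin_cases i <;> simp <;> positivity)
  have hfun : (fun ω => ∑ i : Fin 4, (![2*a, -a, 2*b, -b]) i
        * W ((![(2:ℝ)^j, 2^(j+1), 2^(j'), 2^(j'+1)]) i) ω)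
      = (fun ω => a * (2 * W ((2:ℝ)^j) ω - W ((2:ℝ)^(j+1)) ω)
        + b * (2 * W ((2:ℝ)^j') ω - W ((2:ℝ)^(j'+1)) ω)) := by
    funext ω
    simp [Fin.sum_univ_four]
    ring
  rw [hfun] at key
  rw [key]
  congr 2
  -- now the variance computation
  have p12 : (2:ℝ)^j ≤ 2^(j+1) := pow_le_pow_right₀ one_le_two (by omega)
  have p13 : (2:ℝ)^j ≤ 2^(j') := pow_le_pow_right₀ one_le_two (by omega)
  have p14 : (2:ℝ)^j ≤ 2^(j'+1) := pow_le_pow_right₀ one_le_two (by omega)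
  have p23 : (2:ℝ)^(j+1) ≤ 2^(j') := pow_le_pow_right₀ one_le_two (by omega)
  have p24 : (2:ℝ)^(j+1) ≤ 2^(j'+1) := pow_le_pow_right₀ one_le_two (by omega)
  have p34 : (2:ℝ)^(j') ≤ 2^(j'+1) := pow_le_pow_right₀ one_le_two (by omega)
  simp only [Fin.sum_univ_four, Matrix.cons_val_zero, Matrix.cons_val_one, Matrix.head_cons,
    Matrix.cons_val_two, Matrix.tail_cons, Matrix.cons_val_three]
  rw [min_self, min_self, min_self, min_self,
    min_eq_left p12, min_eq_right p12, min_eq_left p13, min_eq_right p13,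
    min_eq_left p14, min_eq_right p14, min_eq_left p23, min_eq_right p23,
    min_eq_left p24, min_eq_right p24, min_eq_left p34, min_eq_right p34]
  rw [pow_succ ((2:ℝ)) j, pow_succ ((2:ℝ)) j']
  ring

lemma law_pair_ZB (hW : IsStdBM W) {j j' : ℕ} (hjj : j < j') (a b : ℝ) :
    Measure.map (fun ω => a * ZB W j ω + b * ZB W j' ω) volume
      = gaussianReal 0 (Real.toNNReal (a^2 + b^2)) := by
  have hs : (0:ℝ) < Real.sqrt ((2:ℝ)^(j+1)) := Real.sqrt_pos.mpr (by positivity)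
  have hr : (0:ℝ) < Real.sqrt ((2:ℝ)^(j'+1)) := Real.sqrt_pos.mpr (by positivity)
  have hfun : (fun ω => a * ZB W j ω + b * ZB W j' ω)
      = (fun ω => (a / Real.sqrt ((2:ℝ)^(j+1))) * (2 * W ((2:ℝ)^j) ω - W ((2:ℝ)^(j+1)) ω)
        + (b / Real.sqrt ((2:ℝ)^(j'+1))) * (2 * W ((2:ℝ)^j') ω - W ((2:ℝ)^(j'+1)) ω)) := by
    funext ω
    unfold ZB
    field_simp
  rw [hfun, law_pair_f hW hjj]
  congr 2
  rw [div_pow, div_pow, Real.sq_sqrt (by positivity), Real.sq_sqrt (by positivity)]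
  field_simp

lemma even_pow_abs (x : ℝ) (m : ℕ) : x ^ (2*m) = |x| ^ (2*m) := by
  rw [pow_mul, pow_mul, ← sq_abs]

lemma cheb (hW : IsStdBM W) (m n : ℕ) (c : ℝ)
    (hm : 2 * c ^ (2*m) ≤ Mom (2*m)) (hμ : 0 < Mom (2*m)) :
    ((volume : Measure Ω) (⋂ j ∈ Finset.range n, {ω | |ZB W j ω| < c})).toReal
      * ((n : ℝ) * Mom (2*m) / 2) ^ 2 ≤ (n : ℝ) * (Mom (4*m) - Mom (2*m)^2) := by
  set μ : ℝ := Mom (2*m) with hμdef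
  have HL : ∀ j : ℕ, ∀ a b : ℝ, Measure.map (fun ω => a * ZB W j ω + b * ZB W (j+1) ω) volume
      = gaussianReal 0 (Real.toNNReal (a^2 + b^2)) := fun j a b =>
    law_pair_ZB hW (lt_add_one j) a b
  have lawZ : ∀ j : ℕ, Measure.map (ZB W j) volume = gaussianReal 0 1 := fun j =>
    law_single (measurable_ZB hW j) (measurable_ZB hW (j+1)) (HL j)
  have int1 : ∀ j : ℕ, Integrable (fun ω => ZB W j ω ^ (2*m)) (volume : Measure Ω) := by
    intro j
    refine (integrable_abs_pow_rv (measurable_ZB hW j) (lawZ j) (2*m)).congr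
      (Eventually.of_forall fun ω => ?_)
    dsimp only
    rw [← even_pow_abs]
  have intPair : ∀ j j' : ℕ, Integrable (fun ω => ZB W j ω ^ (2*m) * ZB W j' ω ^ (2*m))
      (volume : Measure Ω) := fun j j' =>
    integrable_prod_pow (i := 2*m) (j := 2*m) (N := 4*m)
      (measurable_ZB hW j) (measurable_ZB hW j') (lawZ j) (lawZ j') (by omega)
  have prodMom : ∀ j j' : ℕ, j ≠ j' →
      ∫ ω, ZB W j ω ^ (2*m) * ZB W j' ω ^ (2*m) ∂(volume : Measure Ω) = μ ^ 2 := by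
    intro j j' hne
    rcases lt_or_gt_of_ne hne with h | h
    · exact prod_moment (measurable_ZB hW j) (measurable_ZB hW j')
        (fun a b => law_pair_ZB hW h a b) m
    · have := prod_moment (measurable_ZB hW j') (measurable_ZB hW j)
        (fun a b => law_pair_ZB hW h a b) m
      rw [← this]
      congr 1 with ω
      ring
  have diagMom : ∀ j : ℕ, ∫ ω, ZB W j ω ^ (2*m) * ZB W j ω ^ (2*m) ∂(volume : Measure Ω)
      = Mom (4*m) := by
    intro j
    have h := integral_pow_rv (measurable_ZB hW j) (lawZ j) (4*m)
    rw [← h]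
    congr 1 with ω
    rw [← pow_add]
    congr 1
    omega
  set g : Ω → ℝ := fun ω => ∑ j ∈ Finset.range n, ZB W j ω ^ (2*m) with hg
  have intg : Integrable g (volume : Measure Ω) := by
    rw [hg]
    refine integrable_finset_sum _ fun j _ => int1 j
  have hEg : ∫ ω, g ω ∂(volume : Measure Ω) = n * μ := by
    rw [hg, integral_finset_sum _ fun j _ => int1 j]
    have : ∀ j ∈ Finset.range n, ∫ ω, ZB W j ω ^ (2*m) ∂(volume : Measure Ω) = μ := fun j _ =>
      integral_pow_rv (measurable_ZB hW j) (lawZ j) (2*m)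
    rw [Finset.sum_congr rfl this, Finset.sum_const, Finset.card_range, nsmul_eq_mul]
  have hg2 : (fun ω => g ω ^ 2) = fun ω => ∑ j ∈ Finset.range n, ∑ j' ∈ Finset.range n,
      ZB W j ω ^ (2*m) * ZB W j' ω ^ (2*m) := by
    funext ω
    rw [hg, sq]
    dsimp only
    rw [Finset.sum_mul_sum]
  have intg2 : Integrable (fun ω => g ω ^ 2) (volume : Measure Ω) := by
    rw [hg2]
    exact integrable_finset_sum _ fun j _ => integrable_finset_sum _ fun j' _ => intPair j j'
  have hEg2 : ∫ ω, g ω ^ 2 ∂(volume : Measure Ω)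
      = (n:ℝ)^2 * μ^2 + n * (Mom (4*m) - μ^2) := by
    rw [hg2, integral_finset_sum _ fun j _ => integrable_finset_sum _ fun j' _ => intPair j j']
    have hswap : ∀ j ∈ Finset.range n,
        (∫ ω, ∑ j' ∈ Finset.range n, ZB W j ω ^ (2*m) * ZB W j' ω ^ (2*m) ∂(volume : Measure Ω))
        = ∑ j' ∈ Finset.range n, ∫ ω, ZB W j ω ^ (2*m) * ZB W j' ω ^ (2*m) ∂(volume : Measure Ω) :=
      fun j _ => integral_finset_sum _ fun j' _ => intPair j j'
    rw [Finset.sum_congr rfl hswap]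
    have hin : ∀ j ∈ Finset.range n,
        (∑ j' ∈ Finset.range n, ∫ ω, ZB W j ω ^ (2*m) * ZB W j' ω ^ (2*m) ∂(volume : Measure Ω))
        = μ^2 * n + (Mom (4*m) - μ^2) := by
      intro j hj
      have : ∀ j' ∈ Finset.range n,
          ∫ ω, ZB W j ω ^ (2*m) * ZB W j' ω ^ (2*m) ∂(volume : Measure Ω)
          = μ^2 + (if j' = j then Mom (4*m) - μ^2 else 0) := by
        intro j' _
        by_cases h : j' = j
        · rw [if_pos h, h, diagMom]; ring
        · rw [if_neg h, prodMom j j' (fun hh => h hh.symm), add_zero]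
      rw [Finset.sum_congr rfl this, Finset.sum_add_distrib, Finset.sum_const,
        Finset.card_range, Finset.sum_ite_eq' (Finset.range n) j (fun _ => Mom (4*m) - μ^2),
        if_pos hj, nsmul_eq_mul]
      ring
    rw [Finset.sum_congr rfl hin, Finset.sum_const, Finset.card_range, nsmul_eq_mul]
    ring
  have hVar : ∫ ω, (g ω - n * μ)^2 ∂(volume : Measure Ω) = n * (Mom (4*m) - μ^2) := by
    have hexp : (fun ω => (g ω - n * μ)^2)
        = fun ω => (g ω ^ 2 - (2 * (n*μ)) * g ω) + (n*μ)^2 := by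
      funext ω; ring
    have h1 : Integrable (fun ω => g ω ^ 2 - 2 * ((n:ℝ)*μ) * g ω) (volume : Measure Ω) :=
      (intg2.sub (intg.const_mul (2*((n:ℝ)*μ)))).congr (Eventually.of_forall fun ω => rfl)
    rw [hexp, integral_add h1 (integrable_const _),
      integral_sub intg2 (intg.const_mul _), integral_const_mul, hEg, hEg2, integral_const]
    simp only [measure_univ, probReal_univ, ENNReal.toReal_one, smul_eq_mul, one_mul, mul_one]
    ring
  -- Chebyshev
  set B : Set Ω := ⋂ j ∈ Finset.range n, {ω | |ZB W j ω| < c} with hBdef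
  have hB : MeasurableSet B := by
    refine MeasurableSet.biInter (Finset.range n).countable_toSet fun j _ => ?_
    exact measurableSet_lt ((measurable_ZB hW j).abs) measurable_const
  have hpt : ∀ ω, B.indicator (fun _ => ((n:ℝ) * μ / 2)^2) ω ≤ (g ω - n * μ)^2 := by
    intro ω
    classical
    rw [Set.indicator_apply]
    split_ifs with h
    · have hgle : g ω ≤ (n:ℝ) * μ / 2 := by
        have h1 := Finset.sum_le_card_nsmul (Finset.range n)
          (fun j => ZB W j ω ^ (2*m)) (c ^ (2*m)) (fun j hj => by
            have hj' : |ZB W j ω| < c := Set.mem_iInter₂.mp h j hj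
            rw [even_pow_abs]
            exact pow_le_pow_left₀ (abs_nonneg _) hj'.le _)
        rw [Finset.card_range, nsmul_eq_mul] at h1
        rw [hg]
        have h2 : (n:ℝ) * c ^ (2*m) ≤ (n:ℝ) * (μ/2) := by
          refine mul_le_mul_of_nonneg_left ?_ (Nat.cast_nonneg n)
          linarith
        calc g ω ≤ (n:ℝ) * c ^ (2*m) := h1
          _ ≤ (n:ℝ) * (μ/2) := h2
          _ = (n:ℝ) * μ / 2 := by ring
      have hg0 : 0 ≤ g ω := by
        rw [hg]
        refine Finset.sum_nonneg fun j _ => ?_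
        rw [even_pow_abs]; positivity
      have hfac : 0 ≤ ((n:ℝ)*μ/2 - g ω) * (3*((n:ℝ)*μ)/2 - g ω) := by
        have hnμ : 0 ≤ (n:ℝ)*μ := mul_nonneg (Nat.cast_nonneg n) hμ.le
        refine mul_nonneg (by linarith) (by linarith)
      nlinarith [hfac]
    · exact sq_nonneg _
  have intU : Integrable (fun ω => (g ω - (n:ℝ) * μ)^2) (volume : Measure Ω) := by
    refine ((intg2.sub (intg.const_mul (2*((n:ℝ)*μ)))).add
      (integrable_const (((n:ℝ)*μ)^2))).congr (Eventually.of_forall fun ω => ?_)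
    simp only [Pi.add_apply, Pi.sub_apply]
    ring
  have hmono := integral_mono ((integrable_const (((n:ℝ) * μ / 2)^2)).indicator hB) intU hpt
  rw [integral_indicator_const _ hB, smul_eq_mul, hVar] at hmono
  calc ((volume : Measure Ω) B).toReal * ((n : ℝ) * μ / 2) ^ 2 ≤ n * (Mom (4*m) - μ^2) := hmono
    _ = n * (Mom (4*m) - Mom (2*m)^2) := by rw [hμdef]

end BM

section Final

variable {Ω : Type*} [MeasureSpace Ω] [IsProbabilityMeasure (volume : Measure Ω)]
variable {W : ℝ → Ω → ℝ}

lemma expr_eq (j : ℕ) (ω : Ω) :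
    ((2:ℝ)^(j+1)) ^ (-(3:ℝ)/2)
      * |(2:ℝ)^(j+1) * W ((2:ℝ)^j) ω - (2:ℝ)^j * W ((2:ℝ)^(j+1)) ω|
    = |ZB W j ω| / 2 := by
  set s : ℝ := (2:ℝ)^j with hs
  set t : ℝ := (2:ℝ)^(j+1) with ht
  have hs0 : (0:ℝ) < s := by positivity
  have ht0 : (0:ℝ) < t := by positivity
  have hts : t = 2 * s := by rw [ht, hs, pow_succ]; ring
  have hsq : Real.sqrt t ≠ 0 := (Real.sqrt_pos.mpr ht0).ne'
  have h32 : t ^ (-(3:ℝ)/2) = (Real.sqrt t)⁻¹ * t⁻¹ := by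
    rw [show (-(3:ℝ)/2) = (-(1/2)) + (-1) by norm_num, Real.rpow_add ht0,
      Real.rpow_neg_one, Real.rpow_neg ht0.le, ← Real.sqrt_eq_rpow]
  have hfac : t * W s ω - s * W t ω = s * (2 * W s ω - W t ω) := by
    rw [hts]; ring
  rw [h32, hfac, abs_mul, abs_of_pos hs0]
  have hZ : |ZB W j ω| = |2 * W s ω - W t ω| / Real.sqrt t := by
    rw [ZB, abs_div, abs_of_pos (Real.sqrt_pos.mpr ht0)]
  rw [hZ, hts]
  field_simp

end Final

theorem stmt5 {Ω : Type*} [MeasureSpace Ω] [IsProbabilityMeasure (volume : Measure Ω)]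
    (W : ℝ → Ω → ℝ) (hW : IsStdBM W) :
    (∀ M : ℝ, 0 < M → ∀ᵐ ω ∂(volume : Measure Ω),
      ENNReal.ofReal M ≤
        ⨆ (s : ℝ) (t : ℝ) (_ : 1 ≤ s) (_ : s ≤ t),
          ENNReal.ofReal (t ^ (-(3 : ℝ) / 2) * |t * W s ω - s * W t ω|)) ∧
    ∀ᵐ ω ∂(volume : Measure Ω),
      (⨆ (s : ℝ) (t : ℝ) (_ : 1 ≤ s) (_ : s ≤ t),
          ENNReal.ofReal (t ^ (-(3 : ℝ) / 2) * |t * W s ω - s * W t ω|)) = ⊤ := by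
  set Sup : Ω → ℝ≥0∞ := fun ω => ⨆ (s : ℝ) (t : ℝ) (_ : 1 ≤ s) (_ : s ≤ t),
    ENNReal.ofReal (t ^ (-(3 : ℝ) / 2) * |t * W s ω - s * W t ω|) with hSup
  have hle : ∀ (j : ℕ) (ω : Ω), ENNReal.ofReal (|ZB W j ω| / 2) ≤ Sup ω := by
    intro j ω
    rw [hSup]
    refine le_iSup_of_le ((2:ℝ)^j) ?_
    refine le_iSup_of_le ((2:ℝ)^(j+1)) ?_
    refine le_iSup_of_le (by simpa using pow_le_pow_right₀ (one_le_two : (1:ℝ) ≤ 2) (Nat.zero_le j)) ?_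
    refine le_iSup_of_le (pow_le_pow_right₀ one_le_two (by omega)) ?_
    rw [expr_eq j ω]
  have key : ∀ M : ℝ, 0 < M → ∀ᵐ ω ∂(volume : Measure Ω), ENNReal.ofReal M ≤ Sup ω := by
    intro M hM
    set c : ℝ := 2 * M with hc
    -- choose m
    obtain ⟨m, hm'⟩ : ∃ m : ℕ, (c^2)^m / m.factorial < 1/2 :=
      ((FloorSemiring.tendsto_pow_div_factorial_atTop (c^2)).eventually_lt_const (by norm_num)).exists
    have hμ : (0:ℝ) < Mom (2*m) := by
      rw [Mom_even]
      exact_mod_cast dfN_pos m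
    have hm : 2 * c ^ (2*m) ≤ Mom (2*m) := by
      have hf : (0:ℝ) < m.factorial := by exact_mod_cast m.factorial_pos
      have h1 : (c^2)^m < m.factorial / 2 := by
        rw [div_lt_iff₀ hf] at hm'
        linarith
      have h2 : (m.factorial : ℝ) ≤ Mom (2*m) := by
        rw [Mom_even]
        exact_mod_cast fact_le_dfN m
      rw [pow_mul]
      linarith
    set K : ℝ := Mom (4*m) - Mom (2*m)^2 with hK
    have hK0 : 0 ≤ K := by
      have h := cheb (n := 1) (c := c) hW m hm hμ
      have h0 : (0:ℝ) ≤ ((volume : Measure Ω)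
          (⋂ j ∈ Finset.range 1, {ω | |ZB W j ω| < c})).toReal
          * (((1:ℕ):ℝ) * Mom (2*m) / 2) ^ 2 := by positivity
      have h1 := le_trans h0 h
      simp only [Nat.cast_one, one_mul] at h1
      rw [hK]
      nlinarith [h1, hμ]
    rw [ae_iff]
    set S : Set Ω := {ω | ¬ ENNReal.ofReal M ≤ Sup ω} with hS
    have hSB : ∀ n : ℕ, S ⊆ ⋂ j ∈ Finset.range n, {ω | |ZB W j ω| < c} := by
      intro n ω hω
      refine Set.mem_iInter₂.mpr fun j _ => ?_
      have hlt : Sup ω < ENNReal.ofReal M := not_le.mp hω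
      have h2 : ENNReal.ofReal (|ZB W j ω| / 2) < ENNReal.ofReal M :=
        lt_of_le_of_lt (hle j ω) hlt
      have h3 : |ZB W j ω| / 2 < M := by
        by_contra hcon
        exact absurd h2 (not_lt.mpr (ENNReal.ofReal_le_ofReal (not_lt.mp hcon)))
      show |ZB W j ω| < c
      rw [hc]
      linarith
    have hBn : ∀ n : ℕ, 1 ≤ n →
        (volume : Measure Ω) S ≤ ENNReal.ofReal ((4 * K / Mom (2*m)^2) / n) := by
      intro n hn
      have hcheb := cheb (n := n) (c := c) hW m hm hμ
      have hn0 : (0:ℝ) < (n:ℝ) := by exact_mod_cast hn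
      have hpos : (0:ℝ) < ((n:ℝ) * Mom (2*m) / 2)^2 := by positivity
      have htoReal : ((volume : Measure Ω)
          (⋂ j ∈ Finset.range n, {ω | |ZB W j ω| < c})).toReal
          ≤ (4 * K / Mom (2*m)^2) / n := by
        rw [← le_div_iff₀ hpos] at hcheb
        refine hcheb.trans (le_of_eq ?_)
        rw [hK]
        field_simp
        ring
      calc (volume : Measure Ω) S
          ≤ (volume : Measure Ω) (⋂ j ∈ Finset.range n, {ω | |ZB W j ω| < c}) :=
            measure_mono (hSB n)
        _ = ENNReal.ofReal (((volume : Measure Ω)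
            (⋂ j ∈ Finset.range n, {ω | |ZB W j ω| < c})).toReal) :=
            (ENNReal.ofReal_toReal (measure_ne_top _ _)).symm
        _ ≤ ENNReal.ofReal ((4 * K / Mom (2*m)^2) / n) := ENNReal.ofReal_le_ofReal htoReal
    have htend : Tendsto (fun n : ℕ => ENNReal.ofReal ((4 * K / Mom (2*m)^2) / n)) atTop
        (nhds 0) := by
      rw [show (0:ℝ≥0∞) = ENNReal.ofReal 0 by simp]
      exact ENNReal.tendsto_ofReal (tendsto_const_div_atTop_nhds_zero_nat _)
    have hfin : (volume : Measure Ω) S ≤ 0 :=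
      ge_of_tendsto htend (eventually_atTop.mpr ⟨1, fun n hn => hBn n hn⟩)
    exact le_zero_iff.mp hfin
  refine ⟨key, ?_⟩
  have hall : ∀ᵐ ω ∂(volume : Measure Ω), ∀ k : ℕ, ENNReal.ofReal ((k:ℝ)+1) ≤ Sup ω :=
    ae_all_iff.mpr fun k => key ((k:ℝ)+1) (by positivity)
  filter_upwards [hall] with ω hω
  refine le_antisymm le_top ?_
  rw [← ENNReal.iSup_natCast]
  refine iSup_le fun k => ?_
  refine le_trans ?_ (hω k)
  rw [show ((k:ℝ)+1) = ((k+1:ℕ):ℝ) by push_cast; ring, ENNReal.ofReal_natCast]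
  exact_mod_cast Nat.le_succ k
end
end

section
/- Let W_1, W_2 be independent standard Brownian motions and η > 0. The random function R_η(s,t) = t^{-3/2-η} |(t-s) W_2(1) + t W_1(s-1) - s W_1(t-1)|, defined on A = {(s,t) ∈ [1,∞)² : s ≤ t}, is almost surely bounded and uniformly continuous on A. -/
open MeasureTheory ProbabilityTheory Filter

noncomputable section

section Aux

open Real ENNReal NNReal Set

set_option linter.unusedSectionVars false
set_option linter.unnecessarySeqFocus false
set_option linter.unusedTactic false

/-- moment of order 2p of std gaussian, as ennreal -/
def gaussMoment (p : ℕ) : ℝ≥0∞ := ∫⁻ x, ENNReal.ofReal (x ^ (2*p)) ∂(gaussianReal 0 1)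

lemma gaussMoment_ne_top (p : ℕ) : gaussMoment p ≠ ∞ := by
  have hpdf : gaussianReal 0 1 = volume.withDensity (gaussianPDF 0 1) :=
    gaussianReal_of_var_ne_zero 0 one_ne_zero
  rw [gaussMoment, hpdf, lintegral_withDensity_eq_lintegral_mul _ (measurable_gaussianPDF 0 1)
    (by exact (measurable_id.pow_const _).ennreal_ofReal)]
  have hint : Integrable (fun x : ℝ => gaussianPDFReal 0 1 x * x ^ (2*p)) := by
    have hb : Integrable (fun x : ℝ => ((Real.sqrt (2 * Real.pi))⁻¹ * ((4:ℝ)^p * p.factorial)) * Real.exp (-(1/4) * x ^ 2)) :=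
      (integrable_exp_neg_mul_sq (by norm_num)).const_mul _
    refine hb.mono' ((measurable_gaussianPDFReal 0 1).mul (measurable_id.pow_const _)).aestronglyMeasurable ?_
    filter_upwards with x
    rw [Real.norm_eq_abs, abs_mul, abs_of_nonneg (gaussianPDFReal_nonneg 0 1 x),
      abs_of_nonneg (by rw [pow_mul]; positivity)]
    have hx2p : x ^ (2*p) = (x^2)^p := by rw [pow_mul]
    have key : (x^2)^p ≤ (4:ℝ)^p * p.factorial * Real.exp (x^2/4) := by
      have h1 : (x^2/4)^p / p.factorial ≤ Real.exp (x^2/4) := by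
        have := Real.sum_le_exp_of_nonneg (x := x^2/4) (by positivity) (p+1)
        refine le_trans ?_ this
        have := Finset.single_le_sum (f := fun i => (x^2/4)^i / i.factorial)
          (fun i _ => by positivity) (Finset.mem_range.2 (Nat.lt_succ_self p))
        simpa using this
      have h2 : (x^2/4)^p = (x^2)^p / 4^p := by rw [div_pow]
      rw [h2] at h1
      have hfac : (0:ℝ) < p.factorial := by positivity
      calc (x^2)^p = 4^p * p.factorial * ((x^2)^p / 4^p / p.factorial) := by
            field_simp
        _ ≤ 4^p * p.factorial * Real.exp (x^2/4) := by
            apply mul_le_mul_of_nonneg_left h1 (by positivity)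
    have hpdfval : gaussianPDFReal 0 1 x ≤ (Real.sqrt (2 * Real.pi))⁻¹ * Real.exp (-(x^2/2)) := by
      apply le_of_eq
      simp [gaussianPDFReal]
      left; ring
    calc gaussianPDFReal 0 1 x * x ^ (2*p)
        ≤ (Real.sqrt (2 * Real.pi))⁻¹ * Real.exp (-(x^2/2)) * ((4:ℝ)^p * p.factorial * Real.exp (x^2/4)) := by
          apply mul_le_mul hpdfval (by rw [hx2p]; exact key) (by rw [pow_mul]; positivity) (by positivity)
      _ = (Real.sqrt (2 * Real.pi))⁻¹ * ((4:ℝ)^p * p.factorial) * (Real.exp (-(x^2/2)) * Real.exp (x^2/4)) := by ring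
      _ = (Real.sqrt (2 * Real.pi))⁻¹ * ((4:ℝ)^p * p.factorial) * Real.exp (-(1/4) * x^2) := by
          rw [← Real.exp_add]; ring_nf
  have : ∀ x : ℝ, gaussianPDF 0 1 x * ENNReal.ofReal (x ^ (2*p))
      = ENNReal.ofReal (gaussianPDFReal 0 1 x * x ^ (2*p)) := by
    intro x
    rw [gaussianPDF, ENNReal.ofReal_mul (gaussianPDFReal_nonneg 0 1 x)]
  simp_rw [Pi.mul_apply, this]
  exact hint.lintegral_lt_top.ne


lemma gaussMoment_scale (p : ℕ) (v : ℝ≥0) :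
    ∫⁻ x, ENNReal.ofReal (x ^ (2*p)) ∂(gaussianReal 0 v)
      = ENNReal.ofReal ((v:ℝ)^p) * gaussMoment p := by
  have hmap : (gaussianReal 0 1).map (fun x => Real.sqrt v * x) = gaussianReal 0 v := by
    have h := gaussianReal_map_const_mul (μ := 0) (v := 1) (Real.sqrt v)
    rw [mul_zero] at h
    have h2 : (⟨Real.sqrt (v:ℝ) ^ 2, sq_nonneg _⟩ : ℝ≥0) * 1 = v := by
      ext; push_cast; rw [mul_one, Real.sq_sqrt v.coe_nonneg]; exact rfl
    convert h using 2
    exact h2.symm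
  have hm : Measurable fun x : ℝ => ENNReal.ofReal (x ^ (2*p)) := by fun_prop
  rw [← hmap, lintegral_map hm (measurable_const_mul _)]
  have : ∀ x : ℝ, ENNReal.ofReal ((Real.sqrt v * x) ^ (2*p))
      = ENNReal.ofReal ((v:ℝ)^p) * ENNReal.ofReal (x ^ (2*p)) := by
    intro x
    rw [← ENNReal.ofReal_mul (by positivity)]
    congr 1
    rw [mul_pow, pow_mul, Real.sq_sqrt v.coe_nonneg, pow_mul]
  simp_rw [this]
  rw [lintegral_const_mul _ (by fun_prop)]
  rfl

lemma gauss_tail (p : ℕ) {v : ℝ≥0} {a : ℝ} (ha : 0 < a) :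
    gaussianReal 0 v {x | a ≤ |x|}
      ≤ gaussMoment p * ENNReal.ofReal ((v:ℝ)^p / a^(2*p)) := by
  have hsub : {x : ℝ | a ≤ |x|} ⊆ {x : ℝ | ENNReal.ofReal (a^(2*p)) ≤ ENNReal.ofReal (x^(2*p))} := by
    intro x hx
    simp only [Set.mem_setOf_eq] at hx ⊢
    apply ENNReal.ofReal_le_ofReal
    calc a^(2*p) ≤ |x|^(2*p) := pow_le_pow_left₀ ha.le hx _
      _ = x^(2*p) := (even_two_mul p).pow_abs x
  calc gaussianReal 0 v {x | a ≤ |x|}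
      ≤ gaussianReal 0 v {x | ENNReal.ofReal (a^(2*p)) ≤ ENNReal.ofReal (x^(2*p))} :=
        measure_mono hsub
    _ ≤ (∫⁻ x, ENNReal.ofReal (x^(2*p)) ∂(gaussianReal 0 v)) / ENNReal.ofReal (a^(2*p)) := by
        apply meas_ge_le_lintegral_div (by fun_prop : Measurable fun x : ℝ => ENNReal.ofReal (x^(2*p))).aemeasurable
        · simp [ENNReal.ofReal_eq_zero, not_le]
          positivity
        · exact ENNReal.ofReal_ne_top
    _ = ENNReal.ofReal ((v:ℝ)^p) * gaussMoment p / ENNReal.ofReal (a^(2*p)) := by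
        rw [gaussMoment_scale]
    _ = gaussMoment p * ENNReal.ofReal ((v:ℝ)^p / a^(2*p)) := by
        rw [ENNReal.ofReal_div_of_pos (by positivity), mul_comm, mul_div_assoc]


variable {Ω : Type*} [MeasureSpace Ω] [IsProbabilityMeasure (volume : Measure Ω)]

lemma tail_of_law {X : Ω → ℝ} (hX : Measurable X) {v : ℝ≥0}
    (hlaw : Measure.map X volume = gaussianReal 0 v) (p : ℕ) {a : ℝ} (ha : 0 < a) :
    volume {ω | a ≤ |X ω|} ≤ gaussMoment p * ENNReal.ofReal ((v:ℝ)^p / a^(2*p)) := by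
  have hms : MeasurableSet {x : ℝ | a ≤ |x|} := measurableSet_le measurable_const measurable_abs
  have : volume {ω | a ≤ |X ω|} = (Measure.map X volume) {x | a ≤ |x|} := by
    rw [Measure.map_apply hX hms]
    rfl
  rw [this, hlaw]
  exact gauss_tail p ha

section BM
variable {W : ℝ → Ω → ℝ} (hm : ∀ t : ℝ, Measurable (W t))
  (hf : ∀ (n : ℕ) (c t : Fin n → ℝ), (∀ i, 0 ≤ t i) →
    Measure.map (fun ω => ∑ i, c i * W (t i) ω) volume =
      gaussianReal 0 (Real.toNNReal (∑ i, ∑ j, c i * c j * min (t i) (t j))))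

include hf in
lemma law_point {t : ℝ} (ht : 0 ≤ t) :
    Measure.map (W t) volume = gaussianReal 0 t.toNNReal := by
  have h := hf 1 ![1] ![t] (by intro i; fin_cases i <;> simpa)
  have h1 : (fun ω => ∑ i, (![1] : Fin 1 → ℝ) i * W ((![t] : Fin 1 → ℝ) i) ω) = W t := by
    funext ω; simp
  have h2 : (∑ i, ∑ j, (![1] : Fin 1 → ℝ) i * (![1] : Fin 1 → ℝ) j *
      min ((![t] : Fin 1 → ℝ) i) ((![t] : Fin 1 → ℝ) j)) = t := by
    simp
  rw [h1, h2] at h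
  exact h

include hf in
lemma law_incr {s t : ℝ} (hs : 0 ≤ s) (hst : s ≤ t) :
    Measure.map (fun ω => W t ω - W s ω) volume = gaussianReal 0 (t - s).toNNReal := by
  have h := hf 2 ![1, -1] ![t, s] (by
    intro i; fin_cases i
    · exact le_trans hs hst
    · exact hs)
  have h1 : (fun ω => ∑ i, (![1, -1] : Fin 2 → ℝ) i * W ((![t, s] : Fin 2 → ℝ) i) ω)
      = fun ω => W t ω - W s ω := by
    funext ω; simp [Fin.sum_univ_two]; ring
  have h2 : (∑ i, ∑ j, (![1, -1] : Fin 2 → ℝ) i * (![1, -1] : Fin 2 → ℝ) j *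
      min ((![t, s] : Fin 2 → ℝ) i) ((![t, s] : Fin 2 → ℝ) j)) = t - s := by
    simp [Fin.sum_univ_two, min_self, min_eq_right hst, min_eq_left hst]
    ring
  rw [h1, h2] at h
  exact h

include hm hf in
lemma tail_point (p : ℕ) {t a : ℝ} (ht : 0 ≤ t) (ha : 0 < a) :
    volume {ω | a ≤ |W t ω|} ≤ gaussMoment p * ENNReal.ofReal (t^p / a^(2*p)) := by
  have := tail_of_law (hm t) (law_point hf ht) p ha
  rwa [Real.coe_toNNReal _ ht] at this

include hm hf in
lemma tail_incr (p : ℕ) {s t a : ℝ} (hs : 0 ≤ s) (hst : s ≤ t) (ha : 0 < a) :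
    volume {ω | a ≤ |W t ω - W s ω|}
      ≤ gaussMoment p * ENNReal.ofReal ((t-s)^p / a^(2*p)) := by
  have := tail_of_law ((hm t).sub (hm s)) (law_incr hf hs hst) p ha
  rwa [Real.coe_toNNReal _ (sub_nonneg.2 hst)] at this

end BM


private lemma theta_eq (m : ℕ) : (2:ℝ) ^ (-(m:ℝ)/4) = ((2:ℝ) ^ (-(1:ℝ)/4)) ^ m := by
  rw [← Real.rpow_natCast ((2:ℝ) ^ (-(1:ℝ)/4)) m, ← Real.rpow_mul (by norm_num)]
  congr 1
  ring

private lemma r_lt_one : (2:ℝ) ^ (-(1:ℝ)/4) < 1 :=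
  Real.rpow_lt_one_of_one_lt_of_neg (by norm_num) (by norm_num)

private lemma r_pos : (0:ℝ) < (2:ℝ) ^ (-(1:ℝ)/4) := Real.rpow_pos_of_pos (by norm_num) _

private lemma r_le : (2:ℝ) ^ (-(1:ℝ)/4) ≤ 6/7 := by
  have h4 : ((2:ℝ) ^ (-(1:ℝ)/4)) ^ (4:ℕ) = 1/2 := by
    rw [← Real.rpow_natCast ((2:ℝ) ^ (-(1:ℝ)/4)) 4, ← Real.rpow_mul (by norm_num)]
    norm_num
  apply le_of_pow_le_pow_left₀ (n := 4) (by norm_num) (by norm_num)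
  rw [h4]
  norm_num

private lemma geom_bound (n : ℕ) : (∑ j ∈ Finset.range n, ((2:ℝ) ^ (-(1:ℝ)/4)) ^ j) ≤ 7 := by
  set r : ℝ := (2:ℝ) ^ (-(1:ℝ)/4) with hrdef
  have h1 : r < 1 := r_lt_one
  have h0 : 0 < r := r_pos
  rw [geom_sum_eq (ne_of_lt h1)]
  rw [div_le_iff_of_neg (by linarith)]
  have hrn : 0 < r ^ n := pow_pos h0 n
  have := r_le
  nlinarith

/-- Chaining: dyadic increment bounds plus continuity give an oscillation bound. -/
lemma chain_osc {f : ℝ → ℝ} {a b : ℝ} (hb : 0 ≤ b) (hcont : ContinuousOn f (Icc a (a+1)))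
    (h : ∀ m k : ℕ, k < 2^m → |f (a + ((k:ℝ)+1)/2^m) - f (a + (k:ℝ)/2^m)| ≤ (2:ℝ)^(-(m:ℝ)/4) * b) :
    ∀ x ∈ Icc a (a+1), |f x - f a| ≤ 7 * b := by
  set r : ℝ := (2:ℝ) ^ (-(1:ℝ)/4) with hrdef
  have key : ∀ m k : ℕ, k ≤ 2^m →
      |f (a + (k:ℝ)/2^m) - f a| ≤ (∑ j ∈ Finset.range (m+1), r ^ j) * b := by
    intro m
    induction m with
    | zero =>
      intro k hk
      interval_cases k
      · simpa using hb
      · have := h 0 0 (by norm_num)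
        norm_num at this ⊢
        exact this
    | succ m ih =>
      intro k hk
      have h2 : (2:ℕ)^(m+1) = 2 * 2^m := by ring
      rcases Nat.even_or_odd k with ⟨j, hj⟩ | ⟨j, hj⟩
      · -- k = j + j
        have hj2 : j ≤ 2^m := by omega
        have hcast : a + (k:ℝ)/2^(m+1) = a + (j:ℝ)/2^m := by
          have : (k:ℝ) = 2*j := by rw [hj]; push_cast; ring
          rw [this]
          congr 1
          rw [pow_succ]
          field_simp
        rw [hcast]
        refine (ih j hj2).trans (mul_le_mul_of_nonneg_right
          (Finset.sum_le_sum_of_subset_of_nonneg (Finset.range_subset_range.2 (by omega))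
            (fun i _ _ => (pow_pos r_pos i).le)) hb)
      · -- k = 2j + 1
        have h2j : 2*j < 2^(m+1) := by omega
        have hj2 : j ≤ 2^m := by omega
        have hstep := h (m+1) (2*j) h2j
        have hcast1 : a + ((2*j:ℕ):ℝ)/2^(m+1) = a + (j:ℝ)/2^m := by
          push_cast
          congr 1
          rw [pow_succ]
          field_simp
        have hcast2 : a + (((2*j:ℕ):ℝ)+1)/2^(m+1) = a + (k:ℝ)/2^(m+1) := by
          rw [hj]
          push_cast
          ring_nf
        rw [hcast1, hcast2] at hstep
        calc |f (a + (k:ℝ)/2^(m+1)) - f a|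
            ≤ |f (a + (k:ℝ)/2^(m+1)) - f (a + (j:ℝ)/2^m)| + |f (a + (j:ℝ)/2^m) - f a| := by
              apply abs_sub_le
          _ ≤ (2:ℝ)^(-((m+1:ℕ):ℝ)/4) * b + (∑ j ∈ Finset.range (m+1), r ^ j) * b := by
              exact add_le_add hstep (ih j hj2)
          _ = (∑ j ∈ Finset.range (m+1), r ^ j) * b + r^(m+1) * b := by
              rw [theta_eq]
              ring
          _ = (∑ j ∈ Finset.range (m+2), r ^ j) * b := by
              rw [Finset.sum_range_succ _ (m+1)]
              ring
  -- now extend to all x by continuity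
  intro x hx
  set seq : ℕ → ℝ := fun m => a + (⌊(x - a) * 2^m⌋₊ : ℝ)/2^m with hseq
  have hxa : 0 ≤ x - a := by linarith [hx.1]
  have hxa1 : x - a ≤ 1 := by linarith [hx.2]
  have hkle : ∀ m : ℕ, ⌊(x - a) * 2^m⌋₊ ≤ 2^m := by
    intro m
    calc ⌊(x - a) * 2^m⌋₊ ≤ ⌊((2^m : ℕ) : ℝ)⌋₊ := by
          apply Nat.floor_le_floor
          push_cast
          nlinarith [pow_pos (show (0:ℝ) < 2 by norm_num) m]
      _ = 2^m := Nat.floor_natCast _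
  have hseqmem : ∀ m, seq m ∈ Icc a (a+1) := by
    intro m
    have hp : (0:ℝ) < 2^m := by positivity
    constructor
    · have : (0:ℝ) ≤ (⌊(x - a) * 2^m⌋₊ : ℝ)/2^m := by positivity
      simp only [hseq]; linarith
    · have h1 : (⌊(x - a) * 2^m⌋₊ : ℝ)/2^m ≤ 1 := by
        rw [div_le_one hp]
        exact_mod_cast hkle m
      simp only [hseq]; linarith
  have hbound : ∀ m, |f (seq m) - f a| ≤ 7 * b := by
    intro m
    refine (key m _ (hkle m)).trans ?_
    exact mul_le_mul_of_nonneg_right (geom_bound _) hb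
  have hdist : ∀ m : ℕ, |seq m - x| ≤ (1/2:ℝ)^m := by
    intro m
    have hp : (0:ℝ) < 2^m := by positivity
    have hfl : (⌊(x - a) * 2^m⌋₊ : ℝ) ≤ (x - a) * 2^m := Nat.floor_le (by positivity)
    have hfu : (x - a) * 2^m < (⌊(x - a) * 2^m⌋₊ : ℝ) + 1 := Nat.lt_floor_add_one _
    have heq : (1/2:ℝ)^m = 1/2^m := by rw [div_pow, one_pow]
    have e1 : x - seq m = ((x-a)*2^m - (⌊(x - a) * 2^m⌋₊ : ℝ))/2^m := by
      simp only [hseq]; field_simp; ring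
    have e2 : x - seq m ≤ 1/2^m := by rw [e1]; gcongr; linarith
    have e3 : seq m ≤ x := by
      have : ((⌊(x - a) * 2^m⌋₊ : ℝ))/2^m ≤ ((x-a)*2^m)/2^m := by gcongr
      rw [mul_div_cancel_right₀ _ (ne_of_gt hp)] at this
      simp only [hseq]; linarith
    have hnn : (0:ℝ) ≤ 1/2^m := by positivity
    rw [abs_le, heq]
    refine ⟨by linarith, le_trans (by linarith : seq m - x ≤ 0) hnn⟩
  have htend : Tendsto seq atTop (nhds x) := by
    rw [tendsto_iff_dist_tendsto_zero]
    have hpow : Tendsto (fun m : ℕ => (1/2:ℝ)^m) atTop (nhds 0) :=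
      tendsto_pow_atTop_nhds_zero_of_lt_one (by norm_num) (by norm_num)
    exact squeeze_zero (fun m => dist_nonneg) (fun m => by rw [Real.dist_eq]; exact hdist m) hpow
  have hmem : Tendsto seq atTop (nhdsWithin x (Icc a (a+1))) :=
    tendsto_nhdsWithin_iff.mpr ⟨htend, Eventually.of_forall hseqmem⟩
  have hfc : Tendsto (fun m => f (seq m)) atTop (nhds (f x)) := (hcont x hx).tendsto.comp hmem
  have habs : Tendsto (fun m => |f (seq m) - f a|) atTop (nhds (|f x - f a|)) :=
    (hfc.sub tendsto_const_nhds).abs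
  exact le_of_tendsto habs (Eventually.of_forall hbound)


variable {Ω : Type*} [MeasureSpace Ω] [IsProbabilityMeasure (volume : Measure Ω)]
  {W : ℝ → Ω → ℝ}

lemma growth (hm : ∀ t : ℝ, Measurable (W t))
    (hf : ∀ (n : ℕ) (c t : Fin n → ℝ), (∀ i, 0 ≤ t i) →
      Measure.map (fun ω => ∑ i, c i * W (t i) ω) volume =
        gaussianReal 0 (Real.toNNReal (∑ i, ∑ j, c i * c j * min (t i) (t j))))
    (hc : ∀ᵐ ω ∂(volume : Measure Ω), ContinuousOn (fun t => W t ω) (Set.Ici 0))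
    {δ : ℝ} (hδ : 0 < δ) :
    ∀ᵐ ω ∂(volume : Measure Ω), ∃ C : ℝ, 0 ≤ C ∧ ∀ u : ℝ, 0 ≤ u →
      |W u ω| ≤ C * (1+u) ^ ((1:ℝ)/2 + δ) := by
  classical
  set p : ℕ := max 4 ⌈1/δ⌉₊ with hpdef
  have hp4 : (4:ℝ) ≤ (p:ℝ) := by
    have : 4 ≤ p := le_max_left _ _
    exact_mod_cast this
  have hpδ : 1 ≤ (p:ℝ) * δ := by
    have h1 : (1/δ : ℝ) ≤ (⌈1/δ⌉₊ : ℝ) := Nat.le_ceil _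
    have h2 : (⌈1/δ⌉₊ : ℝ) ≤ (p:ℝ) := by exact_mod_cast le_max_right 4 ⌈1/δ⌉₊
    have := h1.trans h2
    rw [div_le_iff₀ hδ] at this
    linarith
  -- notation
  set cc : ℕ → ℝ := fun n => ((n:ℝ)+1) ^ ((1:ℝ)/2 + δ) with hccdef
  have hcc_pos : ∀ n, 0 < cc n := fun n => Real.rpow_pos_of_pos (by positivity) _
  set E : ℕ → Set Ω := fun n =>
    {ω | cc n ≤ |W ((n:ℝ)+1) ω|} ∪
    ⋃ m : ℕ, ⋃ k ∈ Finset.range (2^m),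
      {ω | (2:ℝ)^(-(m:ℝ)/4) * cc n ≤
        |W (((n:ℝ)+1) + ((k:ℝ)+1)/2^m) ω - W (((n:ℝ)+1) + (k:ℝ)/2^m) ω|} with hEdef
  set bnd : ℕ → ℝ≥0∞ := fun n => ENNReal.ofReal (((n:ℝ)+1) ^ (-(2:ℝ))) with hbnddef
  have hx1 : ∀ n : ℕ, (1:ℝ) ≤ (n:ℝ)+1 := fun n => by
    have := Nat.cast_nonneg (α := ℝ) n; linarith
  -- key real inequalities
  have key1 : ∀ n : ℕ, ((n:ℝ)+1)^(p:ℕ) / (cc n)^(2*p) ≤ ((n:ℝ)+1) ^ (-(2:ℝ)) := by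
    intro n
    have hxpos : (0:ℝ) < (n:ℝ)+1 := by positivity
    have h1 : ((n:ℝ)+1)^(p:ℕ) = ((n:ℝ)+1) ^ ((p:ℕ):ℝ) := (Real.rpow_natCast _ p).symm
    have h2 : (cc n)^(2*p) = ((n:ℝ)+1) ^ (((1:ℝ)/2+δ) * (2*p : ℕ)) := by
      rw [hccdef]
      rw [← Real.rpow_natCast ((((n:ℝ)+1)) ^ ((1:ℝ)/2 + δ)) (2*p), ← Real.rpow_mul hxpos.le]
    rw [h1, h2, ← Real.rpow_sub hxpos]
    apply Real.rpow_le_rpow_of_exponent_le (hx1 n)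
    push_cast
    nlinarith
  have key2 : ∀ n m : ℕ, ((2:ℝ)^(-(m:ℝ)))^(p:ℕ) / ((2:ℝ)^(-(m:ℝ)/4) * cc n)^(2*p)
      ≤ (2:ℝ) ^ (-(2:ℝ)*m) * ((n:ℝ)+1) ^ (-(2:ℝ)) := by
    intro n m
    have hxpos : (0:ℝ) < (n:ℝ)+1 := by positivity
    have e1 : ((2:ℝ)^(-(m:ℝ)))^(p:ℕ) = (2:ℝ) ^ (-(m:ℝ) * p) := by
      rw [← Real.rpow_natCast ((2:ℝ)^(-(m:ℝ))) p, ← Real.rpow_mul (by norm_num)]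
    have e2 : ((2:ℝ)^(-(m:ℝ)/4) * cc n)^(2*p)
        = (2:ℝ) ^ (-(m:ℝ)/4 * (2*p : ℕ)) * ((n:ℝ)+1) ^ (((1:ℝ)/2+δ) * (2*p : ℕ)) := by
      rw [mul_pow, hccdef]
      rw [← Real.rpow_natCast ((2:ℝ)^(-(m:ℝ)/4)) (2*p), ← Real.rpow_mul (by norm_num)]
      rw [← Real.rpow_natCast ((((n:ℝ)+1)) ^ ((1:ℝ)/2 + δ)) (2*p), ← Real.rpow_mul hxpos.le]
    rw [e1, e2]
    rw [div_mul_eq_div_div, ← Real.rpow_sub (by norm_num), div_eq_mul_inv,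
      ← Real.rpow_neg hxpos.le]
    apply mul_le_mul
    · apply Real.rpow_le_rpow_of_exponent_le (by norm_num)
      push_cast
      nlinarith [Nat.cast_nonneg (α := ℝ) m]
    · apply Real.rpow_le_rpow_of_exponent_le (hx1 n)
      push_cast
      nlinarith
    · exact (Real.rpow_pos_of_pos hxpos _).le
    · exact (Real.rpow_pos_of_pos (by norm_num) _).le
  have hhalf : ∀ m : ℕ, ((1:ℝ)/2)^m = (2:ℝ)^(-(m:ℝ)) := by
    intro m
    rw [one_div, inv_pow, ← Real.rpow_natCast 2 m, ← Real.rpow_neg (by norm_num)]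
  -- measure bounds
  have hE : ∀ n, volume (E n) ≤ gaussMoment p * (3 * bnd n) := by
    intro n
    have hA : volume {ω : Ω | cc n ≤ |W ((n:ℝ)+1) ω|} ≤ gaussMoment p * bnd n := by
      refine (tail_point hm hf p (by positivity) (hcc_pos n)).trans ?_
      exact mul_le_mul_right (ENNReal.ofReal_le_ofReal (key1 n)) _
    have hBsingle : ∀ m k : ℕ,
        volume {ω : Ω | (2:ℝ)^(-(m:ℝ)/4) * cc n ≤
          |W (((n:ℝ)+1) + ((k:ℝ)+1)/2^m) ω - W (((n:ℝ)+1) + (k:ℝ)/2^m) ω|}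
        ≤ gaussMoment p * (ENNReal.ofReal ((2:ℝ)^(-(2:ℝ)*m)) * bnd n) := by
      intro m k
      have hs : (0:ℝ) ≤ ((n:ℝ)+1) + (k:ℝ)/2^m := by positivity
      have hst : ((n:ℝ)+1) + (k:ℝ)/2^m ≤ ((n:ℝ)+1) + ((k:ℝ)+1)/2^m := by
        have hp2 : (0:ℝ) < 2^m := by positivity
        have : (k:ℝ)/2^m ≤ ((k:ℝ)+1)/2^m := by gcongr; linarith
        linarith
      have ha : (0:ℝ) < (2:ℝ)^(-(m:ℝ)/4) * cc n :=
        mul_pos (Real.rpow_pos_of_pos (by norm_num) _) (hcc_pos n)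
      refine (tail_incr hm hf p hs hst ha).trans ?_
      have hts : (((n:ℝ)+1) + ((k:ℝ)+1)/2^m) - (((n:ℝ)+1) + (k:ℝ)/2^m) = (2:ℝ)^(-(m:ℝ)) := by
        rw [Real.rpow_neg (by norm_num), Real.rpow_natCast]
        field_simp
        ring
      rw [hts]
      refine mul_le_mul_right ?_ _
      refine le_trans (ENNReal.ofReal_le_ofReal (key2 n m)) (le_of_eq ?_)
      exact ENNReal.ofReal_mul (Real.rpow_nonneg (by norm_num) _)
    have hB : volume (⋃ m : ℕ, ⋃ k ∈ Finset.range (2^m),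
        {ω : Ω | (2:ℝ)^(-(m:ℝ)/4) * cc n ≤
          |W (((n:ℝ)+1) + ((k:ℝ)+1)/2^m) ω - W (((n:ℝ)+1) + (k:ℝ)/2^m) ω|})
        ≤ gaussMoment p * (2 * bnd n) := by
      calc volume (⋃ m : ℕ, ⋃ k ∈ Finset.range (2^m), _)
          ≤ ∑' m : ℕ, volume (⋃ k ∈ Finset.range (2^m),
            {ω : Ω | (2:ℝ)^(-(m:ℝ)/4) * cc n ≤
              |W (((n:ℝ)+1) + ((k:ℝ)+1)/2^m) ω - W (((n:ℝ)+1) + (k:ℝ)/2^m) ω|}) :=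
            measure_iUnion_le _
        _ ≤ ∑' m : ℕ, (gaussMoment p * bnd n) * ENNReal.ofReal ((1/2:ℝ)^m) := by
            apply ENNReal.tsum_le_tsum
            intro m
            refine (measure_biUnion_finset_le _ _).trans ?_
            refine (Finset.sum_le_sum (fun k _ => hBsingle m k)).trans ?_
            rw [Finset.sum_const, Finset.card_range, nsmul_eq_mul]
            have h2m : ((2^m : ℕ) : ℝ≥0∞) = ENNReal.ofReal ((2:ℝ)^m) := by
              rw [ENNReal.ofReal_pow (by norm_num)]
              norm_num
            rw [h2m]
            calc ENNReal.ofReal ((2:ℝ)^m) * (gaussMoment p * (ENNReal.ofReal ((2:ℝ)^(-(2:ℝ)*m)) * bnd n))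
                = (gaussMoment p * bnd n) * (ENNReal.ofReal ((2:ℝ)^m) * ENNReal.ofReal ((2:ℝ)^(-(2:ℝ)*m))) := by
                  ring
              _ = (gaussMoment p * bnd n) * ENNReal.ofReal ((1/2:ℝ)^m) := by
                  rw [← ENNReal.ofReal_mul (by positivity)]
                  congr 1
                  rw [hhalf m, ← Real.rpow_natCast 2 m, ← Real.rpow_add (by norm_num)]
                  congr 1
                  ring
              _ ≤ (gaussMoment p * bnd n) * ENNReal.ofReal ((1/2:ℝ)^m) := le_rfl
        _ = (gaussMoment p * bnd n) * ∑' m : ℕ, ENNReal.ofReal ((1/2:ℝ)^m) :=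
            ENNReal.tsum_mul_left
        _ = gaussMoment p * (2 * bnd n) := by
            rw [← ENNReal.ofReal_tsum_of_nonneg (fun m => by positivity) summable_geometric_two,
              tsum_geometric_two]
            rw [show ENNReal.ofReal (2:ℝ) = 2 from by norm_num]
            ring
    refine (measure_union_le _ _).trans ?_
    refine (add_le_add hA hB).trans ?_
    rw [show (3 : ℝ≥0∞) = 1 + 2 from by norm_num]
    ring_nf
    exact le_rfl
  -- summability
  have hsummable : Summable (fun n : ℕ => ((n:ℝ)+1) ^ (-(2:ℝ))) := by
    have base : Summable (fun n : ℕ => 1 / (n:ℝ) ^ (2:ℝ)) :=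
      Real.summable_one_div_nat_rpow.mpr (by norm_num)
    have shifted : Summable (fun n : ℕ => 1 / ((n:ℝ)+1) ^ (2:ℝ)) := by
      have := (_root_.summable_nat_add_iff 1).mpr base
      refine this.congr ?_
      intro n
      push_cast
      ring_nf
    refine shifted.congr ?_
    intro n
    rw [Real.rpow_neg (by positivity), one_div]
  have hsum : ∑' n, volume (E n) ≠ ⊤ := by
    have h1 : ∑' n, volume (E n) ≤ (gaussMoment p * 3) *
        ENNReal.ofReal (∑' n : ℕ, ((n:ℝ)+1) ^ (-(2:ℝ))) := by
      rw [ENNReal.ofReal_tsum_of_nonneg (fun n => Real.rpow_nonneg (by positivity) _) hsummable,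
        ← ENNReal.tsum_mul_left]
      apply ENNReal.tsum_le_tsum
      intro n
      refine (hE n).trans (le_of_eq ?_)
      rw [hbnddef]
      ring
    refine ne_top_of_le_ne_top ?_ h1
    exact ENNReal.mul_ne_top (ENNReal.mul_ne_top (gaussMoment_ne_top p) (by norm_num))
      ENNReal.ofReal_ne_top
  -- almost sure conclusion
  filter_upwards [hc, ae_eventually_notMem hsum] with ω hcont hev
  obtain ⟨N, hN⟩ := eventually_atTop.mp hev
  -- oscillation bound on [n+1, n+2] for n ≥ N
  have hosc : ∀ n ≥ N, ∀ x ∈ Icc ((n:ℝ)+1) (((n:ℝ)+1)+1),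
      |W x ω - W ((n:ℝ)+1) ω| ≤ 7 * cc n := by
    intro n hn
    have hnE := hN n hn
    rw [hEdef] at hnE
    simp only [Set.mem_union, Set.mem_iUnion, Set.mem_setOf_eq, Finset.mem_range,
      not_or, not_exists, not_le] at hnE
    apply chain_osc (hcc_pos n).le
    · apply hcont.mono
      intro y hy
      have : (0:ℝ) ≤ (n:ℝ)+1 := by positivity
      exact le_trans this hy.1
    · intro m k hk
      exact (hnE.2 m k hk).le
  have hpoint : ∀ n ≥ N, |W ((n:ℝ)+1) ω| ≤ cc n := by
    intro n hn
    have hnE := hN n hn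
    rw [hEdef] at hnE
    simp only [Set.mem_union, Set.mem_setOf_eq, not_or, not_le] at hnE
    exact hnE.1.le
  -- large u bound
  have hbig : ∀ u : ℝ, (N:ℝ)+1 ≤ u → |W u ω| ≤ 8 * (1+u) ^ ((1:ℝ)/2 + δ) := by
    intro u hu
    have hu1 : (0:ℝ) ≤ u - 1 := by
      have : (0:ℝ) ≤ (N:ℝ) := Nat.cast_nonneg N
      linarith
    set n : ℕ := ⌊u - 1⌋₊ with hndef
    have hn1 : (n:ℝ) ≤ u - 1 := Nat.floor_le hu1
    have hn2 : u - 1 < (n:ℝ) + 1 := Nat.lt_floor_add_one _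
    have hnN : N ≤ n := Nat.le_floor (by push_cast; linarith)
    have hmem : u ∈ Icc ((n:ℝ)+1) (((n:ℝ)+1)+1) := ⟨by linarith, by linarith⟩
    have h1 := hosc n hnN u hmem
    have h2 := hpoint n hnN
    have h3 : |W u ω| ≤ 8 * cc n := by
      have := abs_sub_abs_le_abs_sub (W u ω) (W ((n:ℝ)+1) ω)
      have habs : |W u ω| ≤ |W u ω - W ((n:ℝ)+1) ω| + |W ((n:ℝ)+1) ω| := by
        have := abs_sub_le (W u ω) (W ((n:ℝ)+1) ω) 0
        simpa using this
      linarith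
    refine h3.trans ?_
    have : cc n ≤ (1+u) ^ ((1:ℝ)/2 + δ) := by
      rw [hccdef]
      apply Real.rpow_le_rpow (by positivity) (by linarith) (by linarith)
    linarith
  -- small u bound via compactness
  have hcpt : BddAbove ((fun t => |W t ω|) '' Icc 0 ((N:ℝ)+1)) := by
    apply IsCompact.bddAbove
    apply IsCompact.image_of_continuousOn isCompact_Icc
    exact (hcont.mono (fun y hy => hy.1)).abs
  obtain ⟨C₀, hC₀⟩ := hcpt
  rw [mem_upperBounds] at hC₀
  refine ⟨max 8 (max C₀ 0), by positivity, ?_⟩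
  intro u hu
  have hone : 1 ≤ (1+u) ^ ((1:ℝ)/2 + δ) := Real.one_le_rpow (by linarith) (by linarith)
  have hCnn : (0:ℝ) ≤ max 8 (max C₀ 0) := by positivity
  have hCmul : max 8 (max C₀ 0) ≤ max 8 (max C₀ 0) * (1+u) ^ ((1:ℝ)/2 + δ) :=
    le_mul_of_one_le_right hCnn hone
  by_cases hcase : u ≤ (N:ℝ)+1
  · have hle : |W u ω| ≤ C₀ := hC₀ _ (Set.mem_image_of_mem _ ⟨hu, hcase⟩)
    have : C₀ ≤ max 8 (max C₀ 0) := le_trans (le_max_left _ _) (le_max_right _ _)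
    linarith
  · push_neg at hcase
    have := hbig u hcase.le
    have h8 : (8:ℝ) ≤ max 8 (max C₀ 0) := le_max_left _ _
    have := mul_le_mul_of_nonneg_right h8 (Real.rpow_nonneg (by linarith : (0:ℝ) ≤ 1+u) ((1:ℝ)/2 + δ))
    linarith


lemma det_final {f : ℝ → ℝ} {b C η : ℝ} (hη : 0 < η) (hC : 0 ≤ C)
    (hcont : ContinuousOn f (Set.Ici 0))
    (hgrow : ∀ u : ℝ, 0 ≤ u → |f u| ≤ C * (1+u) ^ ((1:ℝ)/2 + η/2)) :
    BddAbove (Set.range fun p : {p : ℝ × ℝ // 1 ≤ p.1 ∧ p.1 ≤ p.2} =>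
      (p : ℝ × ℝ).2 ^ (-(3 : ℝ) / 2 - η) *
        |((p : ℝ × ℝ).2 - (p : ℝ × ℝ).1) * b +
          (p : ℝ × ℝ).2 * f ((p : ℝ × ℝ).1 - 1) -
          (p : ℝ × ℝ).1 * f ((p : ℝ × ℝ).2 - 1)|) ∧
    UniformContinuousOn
      (fun p : ℝ × ℝ => p.2 ^ (-(3 : ℝ) / 2 - η) *
        |(p.2 - p.1) * b + p.2 * f (p.1 - 1) - p.1 * f (p.2 - 1)|)
      {p : ℝ × ℝ | 1 ≤ p.1 ∧ p.1 ≤ p.2} := by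
  set g : ℝ × ℝ → ℝ := fun p => p.2 ^ (-(3 : ℝ) / 2 - η) *
    |(p.2 - p.1) * b + p.2 * f (p.1 - 1) - p.1 * f (p.2 - 1)| with hgdef
  set A : Set (ℝ × ℝ) := {p : ℝ × ℝ | 1 ≤ p.1 ∧ p.1 ≤ p.2} with hAdef
  set K : ℝ := |b| + 2*C with hKdef
  have hK0 : 0 ≤ K := by positivity
  set e : ℝ := (1:ℝ)/2 + η/2 with hedef
  have he0 : 0 ≤ e := by positivity
  -- main pointwise bound on A
  have keybound : ∀ p : ℝ × ℝ, p ∈ A → g p ≤ K * p.2 ^ (-(η/2)) := by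
    rintro ⟨s, t⟩ ⟨hs1, hst⟩
    simp only at hs1 hst
    have ht1 : (1:ℝ) ≤ t := le_trans hs1 hst
    have htpos : (0:ℝ) < t := by linarith
    have hte : (1:ℝ) ≤ t ^ e := Real.one_le_rpow ht1 he0
    have htle : t ≤ t * t ^ e := by nlinarith
    have hfs : |f (s-1)| ≤ C * t ^ e := by
      have h1 := hgrow (s-1) (by linarith)
      have h2 : (1 + (s-1)) = s := by ring
      rw [h2] at h1
      refine h1.trans ?_
      have : s ^ e ≤ t ^ e := Real.rpow_le_rpow (by linarith) hst he0
      rw [hedef]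
      nlinarith [Real.rpow_le_rpow (show (0:ℝ) ≤ s by linarith) hst he0]
    have hft : |f (t-1)| ≤ C * t ^ e := by
      have h1 := hgrow (t-1) (by linarith)
      have h2 : (1 + (t-1)) = t := by ring
      rw [h2] at h1
      exact le_of_le_of_eq h1 rfl
    have hinner : |(t - s) * b + t * f (s-1) - s * f (t-1)| ≤ K * (t * t ^ e) := by
      have htri : |(t - s) * b + t * f (s-1) - s * f (t-1)|
          ≤ |(t-s)*b| + |t * f (s-1)| + |s * f (t-1)| := by
        calc |(t - s) * b + t * f (s-1) - s * f (t-1)|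
            ≤ |(t-s)*b + t * f (s-1)| + |s * f (t-1)| := abs_sub _ _
          _ ≤ |(t-s)*b| + |t * f (s-1)| + |s * f (t-1)| := by
              have := abs_add_le ((t-s)*b) (t * f (s-1))
              linarith
      have e1 : |(t-s)*b| ≤ t * |b| := by
        rw [abs_mul, abs_of_nonneg (by linarith : (0:ℝ) ≤ t - s)]
        nlinarith [abs_nonneg b]
      have e2 : |t * f (s-1)| ≤ t * (C * t ^ e) := by
        rw [abs_mul, abs_of_nonneg htpos.le]
        exact mul_le_mul_of_nonneg_left hfs htpos.le
      have e3 : |s * f (t-1)| ≤ t * (C * t ^ e) := by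
        rw [abs_mul, abs_of_nonneg (by linarith : (0:ℝ) ≤ s)]
        have : s * |f (t-1)| ≤ t * |f (t-1)| :=
          mul_le_mul_of_nonneg_right hst (abs_nonneg _)
        refine this.trans (mul_le_mul_of_nonneg_left hft htpos.le)
      have hb : t * |b| ≤ (t * t ^ e) * |b| := by
        exact mul_le_mul_of_nonneg_right htle (abs_nonneg b)
      rw [hKdef]
      nlinarith [mul_nonneg htpos.le (mul_nonneg hC (Real.rpow_nonneg htpos.le e))]
    have hrpow_pos : (0:ℝ) < t ^ (-(3:ℝ)/2 - η) := Real.rpow_pos_of_pos htpos _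
    have hmul := mul_le_mul_of_nonneg_left hinner hrpow_pos.le
    refine le_trans hmul (le_of_eq ?_)
    rw [show t * t ^ e = t ^ (1 + e) from by
      rw [Real.rpow_add htpos 1 e, Real.rpow_one]]
    rw [show t ^ (-(3:ℝ)/2 - η) * (K * t ^ (1+e)) = K * (t ^ (-(3:ℝ)/2 - η) * t ^ (1+e)) from by ring]
    rw [← Real.rpow_add htpos]
    congr 1
    rw [hedef]
    ring_nf
  have hbound1 : ∀ p : ℝ × ℝ, p ∈ A → g p ≤ K := by
    intro p hp
    refine (keybound p hp).trans ?_
    have ht1 : (1:ℝ) ≤ p.2 := le_trans hp.1 hp.2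
    have : p.2 ^ (-(η/2)) ≤ 1 :=
      Real.rpow_le_one_of_one_le_of_nonpos ht1 (by linarith)
    nlinarith
  constructor
  · refine ⟨K, ?_⟩
    rintro y ⟨q, rfl⟩
    exact hbound1 (q : ℝ × ℝ) q.2
  -- uniform continuity
  have hgA : ContinuousOn g A := by
    have hpow : ContinuousOn (fun p : ℝ × ℝ => p.2 ^ (-(3:ℝ)/2 - η)) A := by
      intro p hp
      have ht1 : (1:ℝ) ≤ p.2 := le_trans hp.1 hp.2
      have : ContinuousAt (fun p : ℝ × ℝ => p.2 ^ (-(3:ℝ)/2 - η)) p :=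
        (Real.continuousAt_rpow_const p.2 _ (Or.inl (by linarith))).comp
          continuous_snd.continuousAt
      exact this.continuousWithinAt
    have hf1 : ContinuousOn (fun p : ℝ × ℝ => f (p.1 - 1)) A := by
      refine hcont.comp ((continuous_fst.sub continuous_const).continuousOn) ?_
      intro p hp
      simp only [Set.mem_Ici]
      linarith [hp.1]
    have hf2 : ContinuousOn (fun p : ℝ × ℝ => f (p.2 - 1)) A := by
      refine hcont.comp ((continuous_snd.sub continuous_const).continuousOn) ?_
      intro p hp
      have := le_trans hp.1 hp.2
      simp only [Set.mem_Ici]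
      linarith
    have hinner : ContinuousOn
        (fun p : ℝ × ℝ => (p.2 - p.1) * b + p.2 * f (p.1 - 1) - p.1 * f (p.2 - 1)) A :=
      (((continuous_snd.sub continuous_fst).continuousOn.mul continuousOn_const).add
        (continuous_snd.continuousOn.mul hf1)).sub
        (continuous_fst.continuousOn.mul hf2)
    exact hpow.mul hinner.abs
  rw [Metric.uniformContinuousOn_iff]
  intro ε hε
  -- threshold T
  have htendsto : Tendsto (fun t : ℝ => K * t ^ (-(η/2))) atTop (nhds (K * 0)) :=
    (tendsto_rpow_neg_atTop (by positivity)).const_mul K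
  rw [mul_zero] at htendsto
  have hev : ∀ᶠ t : ℝ in atTop, K * t ^ (-(η/2)) < ε/3 :=
    htendsto.eventually (gt_mem_nhds (by positivity))
  obtain ⟨T₀, hT₀⟩ := eventually_atTop.mp hev
  set T : ℝ := max 1 T₀ with hTdef
  -- compact piece
  have hAclosed : IsClosed A :=
    (isClosed_le continuous_const continuous_fst).inter
      (isClosed_le continuous_fst continuous_snd)
  have hKcpt : IsCompact (Set.Icc ((1:ℝ),(1:ℝ)) ((T+1),(T+1)) ∩ A) :=
    isCompact_Icc.inter_right hAclosed
  have hUC := hKcpt.uniformContinuousOn_of_continuous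
    (hgA.mono Set.inter_subset_right)
  rw [Metric.uniformContinuousOn_iff] at hUC
  obtain ⟨δ₀, hδ₀pos, hδ₀⟩ := hUC (ε/3) (by positivity)
  refine ⟨min δ₀ 1, by positivity, ?_⟩
  rintro x hx y hy hxy
  have hxy1 : dist x.2 y.2 < 1 := by
    have h1 : dist x.2 y.2 ≤ dist x y := by
      rw [Prod.dist_eq]
      exact le_max_right _ _
    have := lt_of_lt_of_le hxy (min_le_right _ _)
    linarith
  have hxyδ : dist x y < δ₀ := lt_of_lt_of_le hxy (min_le_left _ _)
  by_cases hcase : x.2 ≤ T ∨ y.2 ≤ T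
  · -- both in the compact piece
    have hmem : ∀ z w : ℝ × ℝ, z ∈ A → w ∈ A → z.2 ≤ T → dist z w < 1 →
        z ∈ Set.Icc ((1:ℝ),(1:ℝ)) ((T+1),(T+1)) ∩ A ∧
        w ∈ Set.Icc ((1:ℝ),(1:ℝ)) ((T+1),(T+1)) ∩ A := by
      intro z w hz hw hzT hzw
      have hz2 : (1:ℝ) ≤ z.2 := le_trans hz.1 hz.2
      have hw2d : dist z.2 w.2 ≤ dist z w := by
        rw [Prod.dist_eq]; exact le_max_right _ _
      have hwT : w.2 ≤ T + 1 := by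
        have : |z.2 - w.2| < 1 := by
          rw [← Real.dist_eq]; exact lt_of_le_of_lt hw2d hzw
        rw [abs_lt] at this
        linarith
      have hw1 : (1:ℝ) ≤ w.2 := le_trans hw.1 hw.2
      constructor
      · refine ⟨⟨Prod.mk_le_mk.mpr ⟨hz.1, hz2⟩, Prod.mk_le_mk.mpr ⟨?_, by linarith⟩⟩, hz⟩
        linarith [hz.2]
      · refine ⟨⟨Prod.mk_le_mk.mpr ⟨hw.1, hw1⟩, Prod.mk_le_mk.mpr ⟨?_, hwT⟩⟩, hw⟩
        linarith [hw.2]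
    rcases hcase with hcx | hcy
    · obtain ⟨hzx, hzy⟩ := hmem x y hx hy hcx (by
        have := lt_of_lt_of_le hxy (min_le_right _ _); exact this)
      exact lt_of_lt_of_le (hδ₀ x hzx y hzy hxyδ) (by linarith)
    · obtain ⟨hzy, hzx⟩ := hmem y x hy hx hcy (by
        rw [dist_comm]; exact lt_of_lt_of_le hxy (min_le_right _ _))
      rw [dist_comm]
      exact lt_of_lt_of_le (hδ₀ y hzy x hzx (by rw [dist_comm]; exact hxyδ)) (by linarith)
  · -- both far out
    push_neg at hcase
    obtain ⟨hxT, hyT⟩ := hcase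
    have hT1 : (1:ℝ) ≤ T := le_max_left _ _
    have hgx : g x < ε/3 := by
      refine lt_of_le_of_lt (keybound x hx) (hT₀ x.2 ?_)
      exact le_trans (le_max_right 1 T₀) hxT.le
    have hgy : g y < ε/3 := by
      refine lt_of_le_of_lt (keybound y hy) (hT₀ y.2 ?_)
      exact le_trans (le_max_right 1 T₀) hyT.le
    have hgx0 : 0 ≤ g x := by
      have ht1 : (1:ℝ) ≤ x.2 := le_trans hx.1 hx.2
      exact mul_nonneg (Real.rpow_nonneg (by linarith) _) (abs_nonneg _)
    have hgy0 : 0 ≤ g y := by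
      have ht1 : (1:ℝ) ≤ y.2 := le_trans hy.1 hy.2
      exact mul_nonneg (Real.rpow_nonneg (by linarith) _) (abs_nonneg _)
    rw [Real.dist_eq, abs_lt]
    constructor <;> nlinarith


end Aux

theorem stmt9 {Ω : Type*} [MeasureSpace Ω] [IsProbabilityMeasure (volume : Measure Ω)]
    (W₁ W₂ : ℝ → Ω → ℝ) (h₁ : IsStdBM W₁) (h₂ : IsStdBM W₂)
    (hind : IndepFun (fun ω t => W₁ t ω) (fun ω t => W₂ t ω) (volume : Measure Ω))
    (η : ℝ) (hη : 0 < η) :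
    ∀ᵐ ω ∂(volume : Measure Ω),
      BddAbove (Set.range fun p : {p : ℝ × ℝ // 1 ≤ p.1 ∧ p.1 ≤ p.2} =>
        (p : ℝ × ℝ).2 ^ (-(3 : ℝ) / 2 - η) *
          |((p : ℝ × ℝ).2 - (p : ℝ × ℝ).1) * W₂ 1 ω +
            (p : ℝ × ℝ).2 * W₁ ((p : ℝ × ℝ).1 - 1) ω -
            (p : ℝ × ℝ).1 * W₁ ((p : ℝ × ℝ).2 - 1) ω|) ∧
      UniformContinuousOn
        (fun p : ℝ × ℝ => p.2 ^ (-(3 : ℝ) / 2 - η) *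
          |(p.2 - p.1) * W₂ 1 ω + p.2 * W₁ (p.1 - 1) ω - p.1 * W₁ (p.2 - 1) ω|)
        {p : ℝ × ℝ | 1 ≤ p.1 ∧ p.1 ≤ p.2} := by
  obtain ⟨hm1, hc1, hf1⟩ := h₁
  filter_upwards [hc1, growth hm1 hf1 hc1 (show 0 < η/2 by linarith)] with ω hcont hgrow
  obtain ⟨C, hC0, hCb⟩ := hgrow
  exact det_final (f := fun t => W₁ t ω) (b := W₂ 1 ω) hη hC0 hcont hCb
end
end
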